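/- arXiv:1506.03486 — 5 statements merged into one kernel-verified Lean document; each statement's English description precedes it below -/
import Mathlib

section
/- The statistic h = (X − Y)ᵀ(X′ − Y′) satisfies E[h] = ‖δ‖² and Var(h) = 4·tr(Σ²) + 4·δᵀΣδ. -/
open MeasureTheory ProbabilityTheory

private lemma mulL2 {Ω : Type} [MeasurableSpace Ω] {μ : Measure Ω} {f g : Ω → ℝ}
    (hf : MemLp f 2 μ) (hg : MemLp g 2 μ) : Integrable (fun ω => f ω * g ω) μ := by
  have h : MemLp (f • g) 1 μ := hg.smul hf
  exact memLp_one_iff_integrable.mp h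

private lemma aux_expand {Ω : Type} [MeasurableSpace Ω] {μ : Measure Ω} [IsProbabilityMeasure μ]
    (f1 f2 g1 g2 : Ω → ℝ) (hf1 : MemLp f1 2 μ) (hf2 : MemLp f2 2 μ)
    (hg1 : MemLp g1 2 μ) (hg2 : MemLp g2 2 μ)
    (h12 : IndepFun f1 g2 μ) (h21 : IndepFun g1 f2 μ) :
    ∫ ω, (f1 ω - g1 ω) * (f2 ω - g2 ω) ∂μ
      = (∫ ω, f1 ω * f2 ω ∂μ) + (∫ ω, g1 ω * g2 ω ∂μ)
        - (∫ ω, f1 ω ∂μ) * (∫ ω, g2 ω ∂μ) - (∫ ω, g1 ω ∂μ) * (∫ ω, f2 ω ∂μ) := by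
  have i11 : Integrable (fun ω => f1 ω * f2 ω) μ := mulL2 hf1 hf2
  have i12 : Integrable (fun ω => f1 ω * g2 ω) μ := mulL2 hf1 hg2
  have i21 : Integrable (fun ω => g1 ω * f2 ω) μ := mulL2 hg1 hf2
  have i22 : Integrable (fun ω => g1 ω * g2 ω) μ := mulL2 hg1 hg2
  have e : ∀ ω, (f1 ω - g1 ω) * (f2 ω - g2 ω)
      = f1 ω * f2 ω - f1 ω * g2 ω - g1 ω * f2 ω + g1 ω * g2 ω := fun ω => by ring
  have iA : Integrable (fun ω => f1 ω * f2 ω - f1 ω * g2 ω) μ := i11.sub i12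
  have iB : Integrable (fun ω => f1 ω * f2 ω - f1 ω * g2 ω - g1 ω * f2 ω) μ := iA.sub i21
  simp_rw [e]
  rw [integral_add iB i22, integral_sub iA i21,
    integral_sub i11 i12,
    h12.integral_fun_mul_eq_mul_integral hf1.aestronglyMeasurable hg2.aestronglyMeasurable,
    h21.integral_fun_mul_eq_mul_integral hg1.aestronglyMeasurable hf2.aestronglyMeasurable]
  ring

private lemma aux_cov {Ω : Type} [MeasurableSpace Ω] {μ : Measure Ω} [IsProbabilityMeasure μ]
    (f1 f2 : Ω → ℝ) (hf1 : MemLp f1 2 μ) (hf2 : MemLp f2 2 μ) (c1 c2 : ℝ) :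
    ∫ ω, (f1 ω - c1) * (f2 ω - c2) ∂μ
      = (∫ ω, f1 ω * f2 ω ∂μ) - c2 * (∫ ω, f1 ω ∂μ) - c1 * (∫ ω, f2 ω ∂μ) + c1 * c2 := by
  have i11 : Integrable (fun ω => f1 ω * f2 ω) μ := mulL2 hf1 hf2
  have i1 : Integrable f1 μ := hf1.integrable one_le_two
  have i2 : Integrable f2 μ := hf2.integrable one_le_two
  have e : ∀ ω, (f1 ω - c1) * (f2 ω - c2)
      = f1 ω * f2 ω - c2 * f1 ω - c1 * f2 ω + c1 * c2 := fun ω => by ring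
  have iA : Integrable (fun ω => f1 ω * f2 ω - c2 * f1 ω) μ := i11.sub (i1.const_mul c2)
  have iB : Integrable (fun ω => f1 ω * f2 ω - c2 * f1 ω - c1 * f2 ω) μ :=
    iA.sub (i2.const_mul c1)
  simp_rw [e]
  rw [integral_add iB (integrable_const _), integral_sub iA (i2.const_mul c1),
    integral_sub i11 (i1.const_mul c2), integral_const_mul, integral_const_mul, integral_const]
  simp

/-- Moments of `h = (X − Y)ᵀ(X′ − Y′)` where `X, X′ ~ P` and `Y, Y′ ~ Q` are mutually
independent random vectors in `ℝ^d`: `E[h] = ‖δ‖²` and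
`Var(h) = 4 tr(Σ²) + 4 δᵀΣδ`, with `δ = μ₁ − μ₂` and `Σ = (Σ₁ + Σ₂)/2`. -/
theorem h_statistic_moments
    (d : ℕ) (Ω : Type) [MeasurableSpace Ω] (μ : Measure Ω) [IsProbabilityMeasure μ]
    (X X' Y Y' : Ω → Fin d → ℝ)
    (hmeas : ∀ W ∈ [X, X', Y, Y'], Measurable W)
    (hindep : iIndepFun ![X, Y, X', Y'] μ)
    (hXX' : IdentDistrib X X' μ μ) (hYY' : IdentDistrib Y Y' μ μ)
    (hL2 : ∀ W ∈ [X, X', Y, Y'], ∀ j, MemLp (fun ω => W ω j) 2 μ)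
    (μ₁ μ₂ : Fin d → ℝ)
    (hμ₁ : ∀ j, μ₁ j = ∫ ω, X ω j ∂μ) (hμ₂ : ∀ j, μ₂ j = ∫ ω, Y ω j ∂μ)
    (S₁ S₂ S : Matrix (Fin d) (Fin d) ℝ)
    (hS₁ : ∀ j k, S₁ j k = ∫ ω, (X ω j - μ₁ j) * (X ω k - μ₁ k) ∂μ)
    (hS₂ : ∀ j k, S₂ j k = ∫ ω, (Y ω j - μ₂ j) * (Y ω k - μ₂ k) ∂μ)
    (hS : S = (1 / 2 : ℝ) • (S₁ + S₂))
    (δ : Fin d → ℝ) (hδ : δ = fun j => μ₁ j - μ₂ j) :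
    (∫ ω, ∑ j, (X ω j - Y ω j) * (X' ω j - Y' ω j) ∂μ) = ∑ j, δ j ^ 2 ∧
    (∫ ω, (∑ j, (X ω j - Y ω j) * (X' ω j - Y' ω j)) ^ 2 ∂μ) -
        (∫ ω, ∑ j, (X ω j - Y ω j) * (X' ω j - Y' ω j) ∂μ) ^ 2 =
      4 * Matrix.trace (S * S) + 4 * dotProduct δ (S.mulVec δ) := by
  -- basic measurability
  have mX : Measurable X := hmeas X (by simp)
  have mX' : Measurable X' := hmeas X' (by simp)
  have mY : Measurable Y := hmeas Y (by simp)
  have mY' : Measurable Y' := hmeas Y' (by simp)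
  have hm4 : ∀ i : Fin 4, Measurable (![X, Y, X', Y'] i) := by
    intro i; fin_cases i
    · exact mX
    · exact mY
    · exact mX'
    · exact mY'
  -- L² facts
  have LX : ∀ j, MemLp (fun ω => X ω j) 2 μ := hL2 X (by simp)
  have LX' : ∀ j, MemLp (fun ω => X' ω j) 2 μ := hL2 X' (by simp)
  have LY : ∀ j, MemLp (fun ω => Y ω j) 2 μ := hL2 Y (by simp)
  have LY' : ∀ j, MemLp (fun ω => Y' ω j) 2 μ := hL2 Y' (by simp)
  have LZ : ∀ j, MemLp (fun ω => X ω j - Y ω j) 2 μ := fun j => (LX j).sub (LY j)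
  have LZ' : ∀ j, MemLp (fun ω => X' ω j - Y' ω j) 2 μ := fun j => (LX' j).sub (LY' j)
  -- independence facts
  have hIXY : IndepFun X Y μ := hindep.indepFun (show (0 : Fin 4) ≠ 1 by decide)
  have hIX'Y' : IndepFun X' Y' μ := hindep.indepFun (show (2 : Fin 4) ≠ 3 by decide)
  have hpair : IndepFun (fun ω => (X ω, Y ω)) (fun ω => (X' ω, Y' ω)) μ :=
    hindep.indepFun_prodMk_prodMk hm4 0 1 2 3 (by decide) (by decide) (by decide) (by decide)
  have mevalsub : ∀ j : Fin d,
      Measurable (fun p : (Fin d → ℝ) × (Fin d → ℝ) => p.1 j - p.2 j) := fun j =>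
    ((measurable_pi_apply j).comp measurable_fst).sub ((measurable_pi_apply j).comp measurable_snd)
  have hindepj : ∀ j, IndepFun (fun ω => X ω j - Y ω j) (fun ω => X' ω j - Y' ω j) μ :=
    fun j => hpair.comp (mevalsub j) (mevalsub j)
  have hindepjk : ∀ j k, IndepFun (fun ω => (X ω j - Y ω j) * (X ω k - Y ω k))
      (fun ω => (X' ω j - Y' ω j) * (X' ω k - Y' ω k)) μ :=
    fun j k => hpair.comp ((mevalsub j).mul (mevalsub k)) ((mevalsub j).mul (mevalsub k))
  -- transfer of moments via identical distribution
  have eX' : ∀ j, ∫ ω, X' ω j ∂μ = ∫ ω, X ω j ∂μ :=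
    fun j => ((hXX'.comp (measurable_pi_apply j)).integral_eq).symm
  have eY' : ∀ j, ∫ ω, Y' ω j ∂μ = ∫ ω, Y ω j ∂μ :=
    fun j => ((hYY'.comp (measurable_pi_apply j)).integral_eq).symm
  have eXX' : ∀ j k, ∫ ω, X' ω j * X' ω k ∂μ = ∫ ω, X ω j * X ω k ∂μ :=
    fun j k => ((hXX'.comp ((measurable_pi_apply j).mul (measurable_pi_apply k))).integral_eq).symm
  have eYY' : ∀ j k, ∫ ω, Y' ω j * Y' ω k ∂μ = ∫ ω, Y ω j * Y ω k ∂μ :=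
    fun j k => ((hYY'.comp ((measurable_pi_apply j).mul (measurable_pi_apply k))).integral_eq).symm
  -- means
  have hEZ : ∀ j, ∫ ω, (X ω j - Y ω j) ∂μ = δ j := by
    intro j
    rw [integral_sub ((LX j).integrable one_le_two) ((LY j).integrable one_le_two), hδ]
    simp only [hμ₁, hμ₂]
  have hEZ' : ∀ j, ∫ ω, (X' ω j - Y' ω j) ∂μ = δ j := by
    intro j
    rw [integral_sub ((LX' j).integrable one_le_two) ((LY' j).integrable one_le_two),
      eX' j, eY' j, hδ]
    simp only [hμ₁, hμ₂]
  -- covariance expansions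
  have hS₁' : ∀ j k, S₁ j k = (∫ ω, X ω j * X ω k ∂μ) - μ₁ j * μ₁ k := by
    intro j k
    rw [hS₁ j k, aux_cov _ _ (LX j) (LX k) (μ₁ j) (μ₁ k), ← hμ₁ j, ← hμ₁ k]; ring
  have hS₂' : ∀ j k, S₂ j k = (∫ ω, Y ω j * Y ω k ∂μ) - μ₂ j * μ₂ k := by
    intro j k
    rw [hS₂ j k, aux_cov _ _ (LY j) (LY k) (μ₂ j) (μ₂ k), ← hμ₂ j, ← hμ₂ k]; ring
  have core : ∀ j k, (∫ ω, X ω j * X ω k ∂μ) + (∫ ω, Y ω j * Y ω k ∂μ)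
      - μ₁ j * μ₂ k - μ₂ j * μ₁ k = 2 * S j k + δ j * δ k := by
    intro j k
    rw [hS]
    simp only [Matrix.smul_apply, Matrix.add_apply, smul_eq_mul]
    rw [hS₁' j k, hS₂' j k]
    simp only [hδ]
    ring
  have hMjk : ∀ j k, ∫ ω, (X ω j - Y ω j) * (X ω k - Y ω k) ∂μ = 2 * S j k + δ j * δ k := by
    intro j k
    rw [aux_expand _ _ _ _ (LX j) (LX k) (LY j) (LY k)
        (hIXY.comp (measurable_pi_apply j) (measurable_pi_apply k))
        (hIXY.symm.comp (measurable_pi_apply j) (measurable_pi_apply k)),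
      ← hμ₁ j, ← hμ₁ k, ← hμ₂ j, ← hμ₂ k]
    exact core j k
  have hM'jk : ∀ j k, ∫ ω, (X' ω j - Y' ω j) * (X' ω k - Y' ω k) ∂μ = 2 * S j k + δ j * δ k := by
    intro j k
    rw [aux_expand _ _ _ _ (LX' j) (LX' k) (LY' j) (LY' k)
        (hIX'Y'.comp (measurable_pi_apply j) (measurable_pi_apply k))
        (hIX'Y'.symm.comp (measurable_pi_apply j) (measurable_pi_apply k)),
      eXX' j k, eYY' j k, eX' j, eX' k, eY' j, eY' k,
      ← hμ₁ j, ← hμ₁ k, ← hμ₂ j, ← hμ₂ k]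
    exact core j k
  -- first moment of h
  have hEh : (∫ ω, ∑ j, (X ω j - Y ω j) * (X' ω j - Y' ω j) ∂μ) = ∑ j, δ j ^ 2 := by
    have iP : ∀ j : Fin d, Integrable (fun ω => (X ω j - Y ω j) * (X' ω j - Y' ω j)) μ :=
      fun j => (hindepj j).integrable_mul ((LZ j).integrable one_le_two)
        ((LZ' j).integrable one_le_two)
    rw [integral_finset_sum _ (fun j _ => iP j)]
    exact Finset.sum_congr rfl fun j _ => by
      rw [(hindepj j).integral_fun_mul_eq_mul_integral (LZ j).aestronglyMeasurable (LZ' j).aestronglyMeasurable,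
        hEZ j, hEZ' j, sq]
  refine ⟨hEh, ?_⟩
  -- second moment of h
  have iProd : ∀ j k : Fin d, Integrable (fun ω =>
      ((X ω j - Y ω j) * (X ω k - Y ω k)) * ((X' ω j - Y' ω j) * (X' ω k - Y' ω k))) μ :=
    fun j k => (hindepjk j k).integrable_mul (mulL2 (LZ j) (LZ k)) (mulL2 (LZ' j) (LZ' k))
  have hpt : (fun ω => (∑ j, (X ω j - Y ω j) * (X' ω j - Y' ω j)) ^ 2) =ᵐ[μ]
      (fun ω => ∑ j, ∑ k,
        ((X ω j - Y ω j) * (X ω k - Y ω k)) * ((X' ω j - Y' ω j) * (X' ω k - Y' ω k))) := by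
    refine Filter.Eventually.of_forall fun ω => ?_
    show (∑ j, (X ω j - Y ω j) * (X' ω j - Y' ω j)) ^ 2 = ∑ j, ∑ k,
      ((X ω j - Y ω j) * (X ω k - Y ω k)) * ((X' ω j - Y' ω j) * (X' ω k - Y' ω k))
    rw [sq, Finset.sum_mul_sum]
    exact Finset.sum_congr rfl fun j _ => Finset.sum_congr rfl fun k _ => by ring
  have hEh2 : (∫ ω, (∑ j, (X ω j - Y ω j) * (X' ω j - Y' ω j)) ^ 2 ∂μ)
      = ∑ j, ∑ k, (2 * S j k + δ j * δ k) ^ 2 := by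
    rw [integral_congr_ae hpt,
      integral_finset_sum _ (fun j _ => integrable_finset_sum _ (fun k _ => iProd j k))]
    refine Finset.sum_congr rfl fun j _ => ?_
    rw [integral_finset_sum _ (fun k _ => iProd j k)]
    refine Finset.sum_congr rfl fun k _ => ?_
    rw [(hindepjk j k).integral_fun_mul_eq_mul_integral
        ((LZ j).aestronglyMeasurable.mul (LZ k).aestronglyMeasurable)
        ((LZ' j).aestronglyMeasurable.mul (LZ' k).aestronglyMeasurable),
      hMjk j k, hM'jk j k, sq]
  rw [hEh, hEh2]
  -- symmetry of S
  have hsym1 : ∀ j k, S₁ j k = S₁ k j := by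
    intro j k
    rw [hS₁ j k, hS₁ k j]
    exact integral_congr_ae (Filter.Eventually.of_forall fun ω => mul_comm _ _)
  have hsym2 : ∀ j k, S₂ j k = S₂ k j := by
    intro j k
    rw [hS₂ j k, hS₂ k j]
    exact integral_congr_ae (Filter.Eventually.of_forall fun ω => mul_comm _ _)
  have hsym : ∀ j k, S j k = S k j := by
    intro j k
    rw [hS]
    simp only [Matrix.smul_apply, Matrix.add_apply, smul_eq_mul]
    rw [hsym1 j k, hsym2 j k]
  -- final algebra
  have htr : Matrix.trace (S * S) = ∑ j, ∑ k, S j k * S k j := by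
    simp [Matrix.trace, Matrix.diag, Matrix.mul_apply]
  have hdot : dotProduct δ (S.mulVec δ) = ∑ j, ∑ k, δ j * (S j k * δ k) := by
    simp [dotProduct, Matrix.mulVec, Finset.mul_sum]
  have hδ4 : (∑ j, δ j ^ 2) ^ 2 = ∑ j, ∑ k, δ j ^ 2 * δ k ^ 2 := by
    rw [sq, Finset.sum_mul_sum]
  rw [htr, hdot, hδ4, Finset.mul_sum, Finset.mul_sum, ← Finset.sum_sub_distrib,
    ← Finset.sum_add_distrib]
  refine Finset.sum_congr rfl fun j _ => ?_
  rw [Finset.mul_sum, Finset.mul_sum, ← Finset.sum_sub_distrib, ← Finset.sum_add_distrib]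
  refine Finset.sum_congr rfl fun k _ => ?_
  rw [← hsym j k]
  ring
end

section
/- Fix any ξ ∈ (0,1) and define τ₀(ξ) = min{ s ∈ ℕ : s·V₀ ≥ ((1+√(1/3))²/(e−2))·ln(4/ξ) }. Then with probability at least 1 − ξ/2, simultaneously for all n < τ₀(ξ), |Tₙ| ≤ 2(1+√(1/3))·ln(4/ξ). -/
open MeasureTheory ProbabilityTheory

open scoped ENNReal NNReal

private lemma exp_half_le {x : ℝ} (hx : |x| ≤ 1) :
    Real.exp (x / 2) ≤ 1 + x / 2 + (233 / 1536) * x ^ 2 := by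
  have h2 : |x / 2| ≤ 1 := by
    rw [abs_div]
    rw [show |(2:ℝ)| = 2 by norm_num]
    rw [div_le_one (by norm_num)]; linarith [hx]
  have hb := Real.exp_bound h2 (n := 4) (by norm_num)
  have hsum : ∑ m ∈ Finset.range 4, (x / 2) ^ m / (m.factorial : ℝ)
      = 1 + x / 2 + x ^ 2 / 8 + x ^ 3 / 48 := by
    simp [Finset.sum_range_succ, Nat.factorial]
    ring
  rw [hsum] at hb
  have habs : |x / 2| ^ 4 = x ^ 4 / 16 := by
    rw [abs_div, show |(2:ℝ)| = 2 by norm_num, div_pow, pow_abs,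
      abs_of_nonneg (by positivity : (0:ℝ) ≤ x ^ 4)]
    norm_num
  rw [habs] at hb
  norm_num [Nat.factorial] at hb
  have hx2 : x ^ 2 ≤ 1 := by rw [abs_le] at hx; nlinarith [hx.1, hx.2]
  have h3 : x ^ 3 ≤ |x| * x ^ 2 := by
    nlinarith [neg_abs_le x, le_abs_self x, sq_nonneg x, abs_nonneg x]
  have h4 : x ^ 4 ≤ x ^ 2 := by
    nlinarith [mul_nonneg (sq_nonneg x) (by linarith : (0:ℝ) ≤ 1 - x ^ 2)]
  have h5 : |x| * x ^ 2 ≤ x ^ 2 := by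
    nlinarith [mul_le_mul_of_nonneg_right hx (sq_nonneg x)]
  rw [abs_le] at hb
  nlinarith [hb.2]

section OneSided

variable {Ω : Type} [MeasurableSpace Ω] {μ : Measure Ω} [IsProbabilityMeasure μ]

private lemma integrable_of_ae_bdd {f : Ω → ℝ} (hf : Measurable f) {C : ℝ}
    (h : ∀ᵐ ω ∂μ, |f ω| ≤ C) : Integrable f μ :=
  ⟨hf.aestronglyMeasurable, HasFiniteIntegral.of_bounded (C := C) (by
    filter_upwards [h] with ω hω; simpa [Real.norm_eq_abs] using hω)⟩

private lemma one_sided_tail (g : ℕ → Ω → ℝ)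
    (hmeas : ∀ i, Measurable (g i))
    (hindep : iIndepFun g μ)
    (hbdd : ∀ i, ∀ᵐ ω ∂μ, |g i ω| ≤ 1)
    (hmean : ∀ i, ∫ ω, g i ω ∂μ = 0)
    (V : ℝ) (hVnn : 0 ≤ V)
    (hvar : ∀ i, ∫ ω, (g i ω) ^ 2 ∂μ ≤ V)
    (N : ℕ) (a : ℝ) (ha : 0 < a) :
    μ {ω | ∃ k ≤ N, a ≤ ∑ i ∈ Finset.range k, g i ω} ≤
      ENNReal.ofReal (Real.exp ((233 / 1536) * N * V - a / 2)) := by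
  classical
  set K : ℝ := 233 / 1536 with hK
  -- basic integrability facts
  have hgint : ∀ i, Integrable (g i) μ := fun i =>
    integrable_of_ae_bdd (hmeas i) (hbdd i)
  have hEmeas : ∀ i, Measurable fun ω => Real.exp (g i ω / 2) := fun i =>
    ((hmeas i).div_const 2).exp
  have hEint : ∀ i, Integrable (fun ω => Real.exp (g i ω / 2)) μ := by
    intro i
    refine integrable_of_ae_bdd (hEmeas i) (C := Real.exp 1) ?_
    filter_upwards [hbdd i] with ω hω
    rw [abs_of_pos (Real.exp_pos _)]
    exact Real.exp_le_exp.2 (by rw [abs_le] at hω; linarith [hω.2])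
  have hsqint : ∀ i, Integrable (fun ω => (g i ω) ^ 2) μ := by
    intro i
    refine integrable_of_ae_bdd ((hmeas i).pow_const 2) (C := 1) ?_
    filter_upwards [hbdd i] with ω hω
    rw [abs_of_nonneg (sq_nonneg _)]
    rw [abs_le] at hω; nlinarith [hω.1, hω.2]
  have hE1 : ∀ i, (1:ℝ) ≤ ∫ ω, Real.exp (g i ω / 2) ∂μ := by
    intro i
    have hmono : (fun ω => 1 + g i ω / 2) ≤ᵐ[μ] fun ω => Real.exp (g i ω / 2) :=
      Filter.Eventually.of_forall fun ω => by linarith [Real.add_one_le_exp (g i ω / 2)]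
    have h1 : ∫ ω, (1 + g i ω / 2) ∂μ = 1 := by
      rw [integral_add (integrable_const _) ((hgint i).div_const 2), integral_div, hmean i]
      simp
    calc (1:ℝ) = ∫ ω, (1 + g i ω / 2) ∂μ := h1.symm
    _ ≤ _ := integral_mono_ae ((integrable_const _).add ((hgint i).div_const 2)) (hEint i) hmono
  have hEub : ∀ i, ∫ ω, Real.exp (g i ω / 2) ∂μ ≤ 1 + K * V := by
    intro i
    have hmono : (fun ω => Real.exp (g i ω / 2)) ≤ᵐ[μ]
        fun ω => 1 + g i ω / 2 + K * (g i ω) ^ 2 := by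
      filter_upwards [hbdd i] with ω hω
      exact exp_half_le hω
    have hri : Integrable (fun ω => 1 + g i ω / 2 + K * (g i ω) ^ 2) μ :=
      ((integrable_const _).add ((hgint i).div_const 2)).add ((hsqint i).const_mul K)
    calc ∫ ω, Real.exp (g i ω / 2) ∂μ ≤ ∫ ω, (1 + g i ω / 2 + K * (g i ω) ^ 2) ∂μ :=
          integral_mono_ae (hEint i) hri hmono
    _ = 1 + K * ∫ ω, (g i ω) ^ 2 ∂μ := by
          have hA : Integrable (fun ω => 1 + g i ω / 2) μ :=
            (integrable_const 1).add ((hgint i).div_const 2)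
          have hB : Integrable (fun ω => K * (g i ω) ^ 2) μ := (hsqint i).const_mul K
          have e1 : ∫ ω, (1 + g i ω / 2 + K * (g i ω) ^ 2) ∂μ
              = (∫ ω, (1 + g i ω / 2) ∂μ) + ∫ ω, K * (g i ω) ^ 2 ∂μ := integral_add hA hB
          have e2 : ∫ ω, (1 + g i ω / 2) ∂μ = (∫ ω, (1:ℝ) ∂μ) + ∫ ω, g i ω / 2 ∂μ :=
            integral_add (integrable_const 1) ((hgint i).div_const 2)
          rw [e1, e2, integral_div, hmean i, integral_const_mul]
          simp
    _ ≤ 1 + K * V := by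
          have hKpos : (0:ℝ) ≤ K := by rw [hK]; norm_num
          nlinarith [mul_le_mul_of_nonneg_left (hvar i) hKpos]
  -- the submartingale
  set f : ℕ → Ω → ℝ := fun k ω => Real.exp ((∑ i ∈ Finset.range (k+1), g i ω) / 2) with hf
  have hSmeas : ∀ m, Measurable fun ω => ∑ i ∈ Finset.range m, g i ω := fun m =>
    Finset.measurable_sum _ fun i _ => hmeas i
  have hSbd : ∀ m, ∀ᵐ ω ∂μ, |∑ i ∈ Finset.range m, g i ω| ≤ m := by
    intro m
    filter_upwards [ae_all_iff.2 hbdd] with ω hω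
    calc |∑ i ∈ Finset.range m, g i ω| ≤ ∑ i ∈ Finset.range m, |g i ω| :=
          Finset.abs_sum_le_sum_abs _ _
    _ ≤ ∑ _i ∈ Finset.range m, (1:ℝ) := Finset.sum_le_sum fun i _ => hω i
    _ = m := by simp
  have hfmeas : ∀ k, Measurable (f k) := fun k => ((hSmeas (k+1)).div_const 2).exp
  have hfint : ∀ k, Integrable (f k) μ := by
    intro k
    refine integrable_of_ae_bdd (hfmeas k) (C := Real.exp (k+1)) ?_
    filter_upwards [hSbd (k+1)] with ω hω
    rw [hf, abs_of_pos (Real.exp_pos _)]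
    refine Real.exp_le_exp.2 ?_
    rw [abs_le] at hω
    push_cast at hω ⊢
    linarith [hω.2]
  -- expectation bound by induction
  have hmgf : ∀ m : ℕ, ∫ ω, Real.exp ((∑ i ∈ Finset.range m, g i ω) / 2) ∂μ
      ≤ Real.exp (K * m * V) := by
    intro m
    induction m with
    | zero => simp
    | succ m ih =>
      push_cast
      have hXint : Integrable (fun ω => Real.exp ((∑ i ∈ Finset.range m, g i ω) / 2)) μ := by
        refine integrable_of_ae_bdd ((hSmeas m).div_const 2).exp (C := Real.exp m) ?_
        filter_upwards [hSbd m] with ω hω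
        rw [abs_of_pos (Real.exp_pos _)]
        refine Real.exp_le_exp.2 ?_
        rw [abs_le] at hω
        linarith [hω.2]
      have hind : IndepFun (fun ω => Real.exp ((∑ i ∈ Finset.range m, g i ω) / 2))
          (fun ω => Real.exp (g m ω / 2)) μ := by
        have h1 := hindep.indepFun_sum_range_succ hmeas m
        have h2 := h1.comp (φ := fun y : ℝ => Real.exp (y / 2))
          (ψ := fun y : ℝ => Real.exp (y / 2))
          (measurable_id.div_const 2).exp (measurable_id.div_const 2).exp
        convert h2 using 1
        ext ω
        simp [Function.comp, Finset.sum_apply]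
        rfl
      have hsplit : (fun ω => Real.exp ((∑ i ∈ Finset.range (m+1), g i ω) / 2))
          = fun ω => Real.exp ((∑ i ∈ Finset.range m, g i ω) / 2) * Real.exp (g m ω / 2) := by
        funext ω
        rw [Finset.sum_range_succ, add_div, Real.exp_add]
      have hXnn : (0:ℝ) ≤ ∫ ω, Real.exp ((∑ i ∈ Finset.range m, g i ω) / 2) ∂μ :=
        integral_nonneg fun ω => (Real.exp_pos _).le
      calc ∫ ω, Real.exp ((∑ i ∈ Finset.range (m+1), g i ω) / 2) ∂μ
          = (∫ ω, Real.exp ((∑ i ∈ Finset.range m, g i ω) / 2) ∂μ)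
            * ∫ ω, Real.exp (g m ω / 2) ∂μ := by
            rw [hsplit]
            exact hind.integral_fun_mul_eq_mul_integral hXint.aestronglyMeasurable (hEint m).aestronglyMeasurable
      _ ≤ Real.exp (K * m * V) * (1 + K * V) := by
            apply mul_le_mul ih (hEub m) (le_trans zero_le_one (hE1 m)) (Real.exp_nonneg _)
      _ ≤ Real.exp (K * m * V) * Real.exp (K * V) := by
            have : 1 + K * V ≤ Real.exp (K * V) := by
              linarith [Real.add_one_le_exp (K * V)]
            exact mul_le_mul_of_nonneg_left this (Real.exp_nonneg _)
      _ = Real.exp (K * ((m:ℝ)+1) * V) := by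
            rw [← Real.exp_add]; ring_nf
  -- filtration and submartingale
  set hsm : ∀ i, StronglyMeasurable (g i) := fun i => (hmeas i).stronglyMeasurable with hhsm
  set 𝒢 := Filtration.natural g hsm with h𝒢
  have hadp : StronglyAdapted 𝒢 f := by
    intro k
    have hS : Measurable[𝒢 k] fun ω => ∑ i ∈ Finset.range (k+1), g i ω := by
      refine Finset.measurable_sum _ fun i hi => ?_
      exact ((Filtration.stronglyAdapted_natural hsm i).measurable).mono
        (𝒢.mono (Nat.lt_succ_iff.1 (Finset.mem_range.1 hi))) le_rfl
    exact ((hS.div_const 2).exp).stronglyMeasurable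
  have hsub : Submartingale f 𝒢 μ := by
    refine submartingale_nat hadp hfint ?_
    intro k
    have hfe : f (k+1) = fun ω => f k ω * Real.exp (g (k+1) ω / 2) := by
      funext ω
      rw [hf]
      simp only
      rw [Finset.sum_range_succ, add_div, Real.exp_add]
    have hintmul : Integrable (f k * fun ω' => Real.exp (g (k+1) ω' / 2)) μ := by
      have h := hfint (k+1); rw [hfe] at h; exact h
    have hmul : μ[f (k+1) | 𝒢 k] =ᵐ[μ]
        fun ω => f k ω * (μ[fun ω' => Real.exp (g (k+1) ω' / 2) | 𝒢 k]) ω := by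
      rw [hfe]
      exact condExp_mul_of_stronglyMeasurable_left (hadp k) hintmul (hEint (k+1))
    have hcond : (μ[fun ω' => Real.exp (g (k+1) ω' / 2) | 𝒢 k]) =ᵐ[μ]
        fun _ => ∫ ω', Real.exp (g (k+1) ω' / 2) ∂μ := by
      refine condExp_indep_eq ((hmeas (k+1)).comap_le) (𝒢.le k) ?_ ?_
      · exact Measurable.stronglyMeasurable
          (((Measurable.of_comap_le le_rfl).div_const 2).exp)
      · exact hindep.indep_comap_natural_of_lt hsm (Nat.lt_succ_self k)
    filter_upwards [hmul, hcond] with ω h1 h2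
    rw [h1, h2]
    exact le_mul_of_one_le_right (Real.exp_nonneg _) (hE1 (k+1))
  -- maximal inequality
  rcases Nat.eq_zero_or_pos N with hN0 | hNpos
  · subst hN0
    have hempty : {ω | ∃ k ≤ 0, a ≤ ∑ i ∈ Finset.range k, g i ω} = ∅ := by
      ext ω
      simp only [Set.mem_setOf_eq, Set.mem_empty_iff_false, iff_false]
      rintro ⟨k, hk, hak⟩
      obtain rfl := Nat.le_zero.1 hk
      simp only [Finset.range_zero, Finset.sum_empty] at hak
      linarith
    rw [hempty]
    simp
  · obtain ⟨n, rfl⟩ : ∃ n, N = n + 1 := ⟨N - 1, (Nat.succ_pred_eq_of_pos hNpos).symm⟩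
    set ε : ℝ≥0 := Real.toNNReal (Real.exp (a / 2)) with hε
    have hεcoe : (ε : ℝ) = Real.exp (a / 2) := Real.coe_toNNReal _ (Real.exp_pos _).le
    have hmax := maximal_ineq hsub (fun k ω => (Real.exp_nonneg _)) (ε := ε) n
    set Eset := {ω | (ε : ℝ) ≤ (Finset.range (n+1)).sup' Finset.nonempty_range_add_one
      fun k => f k ω} with hEset
    have hsubset : {ω | ∃ k ≤ n + 1, a ≤ ∑ i ∈ Finset.range k, g i ω} ⊆ Eset := by
      rintro ω ⟨k, hk, hak⟩
      rcases Nat.eq_zero_or_pos k with rfl | hkpos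
      · simp at hak; linarith
      obtain ⟨j, rfl⟩ : ∃ j, k = j + 1 := ⟨k - 1, (Nat.succ_pred_eq_of_pos hkpos).symm⟩
      have hjlt : j ∈ Finset.range (n+1) := Finset.mem_range.2 (by omega)
      show (ε : ℝ) ≤ (Finset.range (n+1)).sup' Finset.nonempty_range_add_one fun k => f k ω
      refine (Finset.le_sup'_iff _).2 ⟨j, hjlt, ?_⟩
      rw [hεcoe, hf]
      exact Real.exp_le_exp.2 (by linarith)
    have hchain : (ε : ℝ≥0∞) * μ {ω | ∃ k ≤ n + 1, a ≤ ∑ i ∈ Finset.range k, g i ω}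
        ≤ ENNReal.ofReal (Real.exp (K * (n+1) * V)) := by
      calc (ε : ℝ≥0∞) * μ {ω | ∃ k ≤ n + 1, a ≤ ∑ i ∈ Finset.range k, g i ω}
          ≤ (ε : ℝ≥0∞) * μ Eset := by
            exact mul_le_mul_right (measure_mono hsubset) _
      _ ≤ ENNReal.ofReal (∫ ω in Eset, f n ω ∂μ) := by
            simpa [ENNReal.smul_def] using hmax
      _ ≤ ENNReal.ofReal (∫ ω, f n ω ∂μ) := by
            refine ENNReal.ofReal_le_ofReal ?_
            exact setIntegral_le_integral (hfint n)
              (Filter.Eventually.of_forall fun ω => Real.exp_nonneg _)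
      _ ≤ ENNReal.ofReal (Real.exp (K * (n+1) * V)) := by
            refine ENNReal.ofReal_le_ofReal ?_
            have := hmgf (n+1)
            push_cast at this ⊢
            exact this
    have hne0 : ENNReal.ofReal (Real.exp (a / 2)) ≠ 0 := by
      simp [ENNReal.ofReal_eq_zero, not_le, Real.exp_pos]
    have hnetop : ENNReal.ofReal (Real.exp (a / 2)) ≠ ⊤ := ENNReal.ofReal_ne_top
    rw [← ENNReal.mul_le_mul_iff_right hne0 hnetop]
    calc ENNReal.ofReal (Real.exp (a / 2)) * μ {ω | ∃ k ≤ n + 1, a ≤ ∑ i ∈ Finset.range k, g i ω}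
        ≤ ENNReal.ofReal (Real.exp (K * (n+1) * V)) := by
          have : (ε : ℝ≥0∞) = ENNReal.ofReal (Real.exp (a / 2)) := rfl
          rw [← this]
          exact hchain
    _ = ENNReal.ofReal (Real.exp (a / 2)) * ENNReal.ofReal
          (Real.exp (K * (n+1) * V - a / 2)) := by
          rw [← ENNReal.ofReal_mul (Real.exp_nonneg _), ← Real.exp_add]
          ring_nf
    _ = _ := by push_cast; ring_nf

end OneSided

/-- Balsubramani (2015), Theorem 16: for i.i.d. mean-zero increments `hᵢ` with
`|hᵢ| ≤ 1` a.s. and `V₀ = E[hᵢ²]`, letting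
`τ₀(ξ) = min{s : s V₀ ≥ ((1+√(1/3))²/(e−2)) ln(4/ξ)}`, with probability at least
`1 − ξ/2`, simultaneously for all `n < τ₀(ξ)`, `|Tₙ| ≤ 2(1+√(1/3)) ln(4/ξ)`. -/
theorem initial_time_bound
    (Ω : Type) [MeasurableSpace Ω] (μ : Measure Ω) [IsProbabilityMeasure μ]
    (h : ℕ → Ω → ℝ)
    (hmeas : ∀ i, Measurable (h i))
    (hindep : iIndepFun h μ)
    (hid : ∀ i, IdentDistrib (h i) (h 0) μ μ)
    (hbdd : ∀ i, ∀ᵐ ω ∂μ, |h i ω| ≤ 1)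
    (hmean : ∀ i, ∫ ω, h i ω ∂μ = 0)
    (V₀ : ℝ) (hV₀ : V₀ = ∫ ω, (h 0 ω) ^ 2 ∂μ)
    (ξ : ℝ) (hξ₀ : 0 < ξ) (hξ₁ : ξ < 1) :
    ENNReal.ofReal (1 - ξ / 2) ≤
      μ {ω | ∀ n : ℕ,
        n < sInf {s : ℕ | (1 + Real.sqrt (1 / 3)) ^ 2 / (Real.exp 1 - 2) * Real.log (4 / ξ)
            ≤ s * V₀} →
        |∑ i ∈ Finset.range n, h i ω| ≤ 2 * (1 + Real.sqrt (1 / 3)) * Real.log (4 / ξ)} := by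
  set t := Real.sqrt (1 / 3) with hts
  set L := Real.log (4 / ξ) with hLs
  have hL : 0 < L := Real.log_pos (by rw [lt_div_iff₀ hξ₀]; linarith)
  have htnn : 0 ≤ t := Real.sqrt_nonneg _
  have ht2 : t ^ 2 = 1 / 3 := Real.sq_sqrt (by norm_num)
  have htlb : (0.577 : ℝ) ≤ t := by
    by_contra hc
    push_neg at hc
    nlinarith [mul_self_le_mul_self htnn hc.le]
  have he1 : (2.7182818283 : ℝ) ≤ Real.exp 1 := Real.exp_one_gt_d9.le
  have he2 : Real.exp 1 ≤ (2.7182818286 : ℝ) := Real.exp_one_lt_d9.le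
  have hepos : (0 : ℝ) < Real.exp 1 - 2 := by linarith
  have hKey : (233 / 1536 : ℝ) * ((1 + t) ^ 2 / (Real.exp 1 - 2)) ≤ t := by
    rw [← mul_div_assoc, div_le_iff₀ hepos]
    nlinarith [mul_nonneg
      (by linarith : (0:ℝ) ≤ Real.exp 1 - 2 - 2 * (233 / 1536))
      (by linarith : (0:ℝ) ≤ t - 0.577)]
  have hV0nn : 0 ≤ V₀ := hV₀ ▸ integral_nonneg fun ω => sq_nonneg _
  have hvar : ∀ i, ∫ ω, (h i ω) ^ 2 ∂μ = V₀ := fun i =>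
    hV₀ ▸ ((hid i).comp (measurable_id.pow_const 2)).integral_eq
  set a := 2 * (1 + t) * L with has
  have ha : 0 < a := by rw [has]; nlinarith
  rcases Nat.eq_zero_or_pos
    (sInf {s : ℕ | (1 + t) ^ 2 / (Real.exp 1 - 2) * L ≤ s * V₀}) with hτ0 | hτpos
  · have huniv : {ω | ∀ n : ℕ,
        n < sInf {s : ℕ | (1 + t) ^ 2 / (Real.exp 1 - 2) * L ≤ s * V₀} →
        |∑ i ∈ Finset.range n, h i ω| ≤ a} = Set.univ := by
      ext ω
      simp only [Set.mem_setOf_eq, Set.mem_univ, iff_true]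
      intro n hn
      rw [hτ0] at hn
      exact absurd hn (Nat.not_lt_zero n)
    rw [huniv, measure_univ]
    exact ENNReal.ofReal_le_one.2 (by linarith)
  obtain ⟨N, hτN⟩ : ∃ N, sInf {s : ℕ | (1 + t) ^ 2 / (Real.exp 1 - 2) * L ≤ s * V₀}
      = N + 1 := ⟨_ - 1, (Nat.succ_pred_eq_of_pos hτpos).symm⟩
  have hNlt : (N : ℝ) * V₀ < (1 + t) ^ 2 / (Real.exp 1 - 2) * L := by
    by_contra hc
    push_neg at hc
    have hmem : N ∈ {s : ℕ | (1 + t) ^ 2 / (Real.exp 1 - 2) * L ≤ s * V₀} := hc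
    have := Nat.sInf_le hmem
    omega
  rw [hτN]
  set G := {ω | ∀ n : ℕ, n < N + 1 → |∑ i ∈ Finset.range n, h i ω| ≤ a} with hGs
  have hGm : MeasurableSet G := by
    have : G = ⋂ n, ⋂ _ : n < N + 1, {ω | |∑ i ∈ Finset.range n, h i ω| ≤ a} := by
      ext ω; simp [Set.mem_iInter, hGs]
    rw [this]
    exact MeasurableSet.iInter fun n => MeasurableSet.iInter fun _ =>
      measurableSet_le ((Finset.measurable_sum _ fun i _ => hmeas i).abs) measurable_const
  set T1 := {ω | ∃ k ≤ N, a ≤ ∑ i ∈ Finset.range k, h i ω} with hT1s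
  set T2 := {ω | ∃ k ≤ N, a ≤ ∑ i ∈ Finset.range k, -h i ω} with hT2s
  have hcompl : Gᶜ ⊆ T1 ∪ T2 := by
    intro ω hω
    simp only [hGs, Set.mem_compl_iff, Set.mem_setOf_eq, not_forall] at hω
    obtain ⟨n, hn, hna⟩ := hω
    rcases abs_cases (∑ i ∈ Finset.range n, h i ω) with ⟨heq, _⟩ | ⟨heq, _⟩
    · exact Or.inl ⟨n, by omega, by rw [heq] at hna; linarith [not_le.1 hna]⟩
    · refine Or.inr ⟨n, by omega, ?_⟩
      rw [heq] at hna
      have := not_le.1 hna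
      rw [Finset.sum_neg_distrib]
      linarith
  have hbound1 : μ T1 ≤ ENNReal.ofReal (Real.exp ((233 / 1536) * N * V₀ - a / 2)) :=
    one_sided_tail h hmeas hindep hbdd hmean V₀ hV0nn (fun i => (hvar i).le) N a ha
  have hbound2 : μ T2 ≤ ENNReal.ofReal (Real.exp ((233 / 1536) * N * V₀ - a / 2)) := by
    refine one_sided_tail (fun i ω => -h i ω) (fun i => (hmeas i).neg) ?_ ?_ ?_ V₀ hV0nn ?_ N a ha
    · exact hindep.comp (fun _ => fun x : ℝ => -x) fun _ => measurable_neg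
    · intro i; filter_upwards [hbdd i] with ω hω; simpa using hω
    · intro i; rw [integral_neg, hmean i, neg_zero]
    · intro i; simpa using (hvar i).le
  have hexp : Real.exp ((233 / 1536) * N * V₀ - a / 2) ≤ ξ / 4 := by
    rw [show ξ / 4 = Real.exp (Real.log (ξ / 4)) from (Real.exp_log (by positivity)).symm]
    refine Real.exp_le_exp.2 ?_
    have hlog : Real.log (ξ / 4) = -L := by
      rw [hLs, ← Real.log_inv, inv_div]
    rw [hlog, has]
    have h1 : (233 / 1536 : ℝ) * ((N : ℝ) * V₀)
        ≤ (233 / 1536) * ((1 + t) ^ 2 / (Real.exp 1 - 2) * L) :=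
      mul_le_mul_of_nonneg_left hNlt.le (by norm_num)
    have h2 : (233 / 1536 : ℝ) * ((1 + t) ^ 2 / (Real.exp 1 - 2)) * L ≤ t * L :=
      mul_le_mul_of_nonneg_right hKey hL.le
    nlinarith [h1, h2]
  have hbad : μ Gᶜ ≤ ENNReal.ofReal (ξ / 2) := by
    calc μ Gᶜ ≤ μ (T1 ∪ T2) := measure_mono hcompl
    _ ≤ μ T1 + μ T2 := measure_union_le _ _
    _ ≤ ENNReal.ofReal (ξ / 4) + ENNReal.ofReal (ξ / 4) := by
        refine add_le_add (hbound1.trans ?_) (hbound2.trans ?_) <;>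
          exact ENNReal.ofReal_le_ofReal hexp
    _ = ENNReal.ofReal (ξ / 2) := by
        rw [← ENNReal.ofReal_add (by positivity) (by positivity)]
        congr 1
        ring
  have hG : μ G = 1 - μ Gᶜ := by
    conv_lhs => rw [← compl_compl G]
    exact prob_compl_eq_one_sub hGm.compl
  rw [hG]
  refine ENNReal.le_sub_of_add_le_right (measure_ne_top μ _) ?_
  calc ENNReal.ofReal (1 - ξ / 2) + μ Gᶜ
      ≤ ENNReal.ofReal (1 - ξ / 2) + ENNReal.ofReal (ξ / 2) := add_le_add le_rfl hbad
  _ = 1 := by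
      rw [← ENNReal.ofReal_add (by linarith) (by linarith)]
      norm_num
end

section
/- There exists an absolute constant C₃ > 0 such that for any ξ ∈ (0,1), with probability at least 1 − ξ, simultaneously for all n ≥ 1, the cumulative variance process satisfies n·V₀ ≤ C₃·(V̂ₙ + C₀(ξ)). -/
open MeasureTheory ProbabilityTheory
open scoped ENNReal NNReal

section Aux

private lemma exp_neg_le_of_mem (x : ℝ) (hx0 : 0 ≤ x) (hx1 : x ≤ 1) :
    Real.exp (-x) ≤ 1 - (1 - Real.exp (-1)) * x := by
  have h := convexOn_exp.2 (Set.mem_univ (0:ℝ)) (Set.mem_univ (-1:ℝ))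
    (by linarith : (0:ℝ) ≤ 1 - x) hx0 (by ring)
  simp only [smul_eq_mul, mul_zero, mul_neg_one, zero_add, Real.exp_zero, mul_one] at h
  linarith

private lemma mgf_neg_one_le {Ω : Type} [MeasurableSpace Ω] (μ : Measure Ω)
    [IsProbabilityMeasure μ]
    (X : Ω → ℝ) (hXm : Measurable X) (hb : ∀ᵐ ω ∂μ, X ω ∈ Set.Icc (0:ℝ) 1)
    (V₀ : ℝ) (hV0 : 0 ≤ V₀) (hE : ∫ ω, X ω ∂μ = V₀) :
    mgf X μ (-1) ≤ Real.exp (-(V₀ / 2)) := by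
  have hintX : Integrable X μ := by
    refine (integrable_const (1:ℝ)).mono' hXm.aestronglyMeasurable ?_
    filter_upwards [hb] with ω hω
    rw [Real.norm_eq_abs, abs_le]; exact ⟨by linarith [hω.1], hω.2⟩
  have hintE : Integrable (fun ω => Real.exp (-1 * X ω)) μ := by
    refine (integrable_const (1:ℝ)).mono' (hXm.const_mul (-1)).exp.aestronglyMeasurable ?_
    filter_upwards [hb] with ω hω
    rw [Real.norm_eq_abs, abs_of_pos (Real.exp_pos _)]
    rw [show (-1 : ℝ) * X ω = -(X ω) by ring, ← Real.exp_zero]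
    exact Real.exp_le_exp.2 (by linarith [hω.1])
  have h1 : mgf X μ (-1) ≤ ∫ ω, (1 - (1 - Real.exp (-1)) * X ω) ∂μ := by
    rw [mgf]
    refine integral_mono_ae hintE ((integrable_const (1:ℝ)).sub (hintX.const_mul _)) ?_
    filter_upwards [hb] with ω hω
    have := exp_neg_le_of_mem (X ω) hω.1 hω.2
    simpa [neg_one_mul] using this
  have h2 : ∫ ω, (1 - (1 - Real.exp (-1)) * X ω) ∂μ = 1 - (1 - Real.exp (-1)) * V₀ := by
    rw [integral_sub (integrable_const 1) (hintX.const_mul _), integral_const,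
      integral_const_mul, hE]
    simp
  have h3 : 1 - (1 - Real.exp (-1)) * V₀ ≤ Real.exp (-((1 - Real.exp (-1)) * V₀)) := by
    linarith [Real.add_one_le_exp (-((1 - Real.exp (-1)) * V₀))]
  have he : Real.exp (-1) ≤ 1/2 := by
    rw [Real.exp_neg]
    rw [inv_le_comm₀ (Real.exp_pos 1) (by norm_num)]
    norm_num
    linarith [Real.add_one_le_exp (1:ℝ)]
  have h4 : Real.exp (-((1 - Real.exp (-1)) * V₀)) ≤ Real.exp (-(V₀ / 2)) := by
    apply Real.exp_le_exp.2; nlinarith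
  linarith

private lemma chernoff_sum {Ω : Type} [MeasurableSpace Ω] (μ : Measure Ω)
    [IsProbabilityMeasure μ]
    (X : ℕ → Ω → ℝ) (hXm : ∀ i, Measurable (X i))
    (hind : iIndepFun X μ)
    (hb : ∀ i, ∀ᵐ ω ∂μ, X i ω ∈ Set.Icc (0:ℝ) 1)
    (V₀ : ℝ) (hV0 : 0 ≤ V₀) (hE : ∀ i, ∫ ω, X i ω ∂μ = V₀)
    (m : ℕ) (t : ℝ) :
    μ {ω | ∑ i ∈ Finset.range m, X i ω ≤ t} ≤
      ENNReal.ofReal (Real.exp (t - m * V₀ / 2)) := by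
  set S : Ω → ℝ := ∑ i ∈ Finset.range m, X i with hS
  have hSm : Measurable S := by
    have : S = fun ω => ∑ i ∈ Finset.range m, X i ω := by ext ω; simp [hS]
    rw [this]; exact Finset.measurable_sum _ fun i _ => hXm i
  have hSnn : ∀ᵐ ω ∂μ, 0 ≤ S ω := by
    have := ae_all_iff.2 hb
    filter_upwards [this] with ω hω
    simp only [hS, Finset.sum_apply]
    exact Finset.sum_nonneg fun i _ => (hω i).1
  have hint : Integrable (fun ω => Real.exp (-1 * S ω)) μ := by
    refine (integrable_const (1:ℝ)).mono' (hSm.const_mul (-1)).exp.aestronglyMeasurable ?_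
    filter_upwards [hSnn] with ω hω
    rw [Real.norm_eq_abs, abs_of_pos (Real.exp_pos _),
      show (-1:ℝ) * S ω = -(S ω) by ring, ← Real.exp_zero]
    exact Real.exp_le_exp.2 (by linarith)
  have key := measure_le_le_exp_mul_mgf (μ := μ) (X := S) t (by norm_num : (-1:ℝ) ≤ 0) hint
  have hmgf : mgf S μ (-1) ≤ Real.exp (-(V₀/2)) ^ m := by
    rw [hS, hind.mgf_sum hXm]
    calc ∏ i ∈ Finset.range m, mgf (X i) μ (-1)
        ≤ ∏ _i ∈ Finset.range m, Real.exp (-(V₀/2)) :=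
          Finset.prod_le_prod (fun i _ => mgf_nonneg)
            (fun i _ => mgf_neg_one_le μ (X i) (hXm i) (hb i) V₀ hV0 (hE i))
      _ = Real.exp (-(V₀/2)) ^ m := by rw [Finset.prod_const, Finset.card_range]
  have hreal : (μ {ω | S ω ≤ t}).toReal ≤ Real.exp (t - m * V₀ / 2) := by
    calc (μ {ω | S ω ≤ t}).toReal ≤ Real.exp (-(-1) * t) * mgf S μ (-1) := key
      _ ≤ Real.exp t * Real.exp (-(V₀/2)) ^ m := by
          rw [show -(-1:ℝ) * t = t by ring]
          exact mul_le_mul_of_nonneg_left hmgf (Real.exp_pos t).le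
      _ = Real.exp (t - m * V₀ / 2) := by
          rw [← Real.exp_nat_mul, ← Real.exp_add]; ring_nf
  have hset : {ω | ∑ i ∈ Finset.range m, X i ω ≤ t} = {ω | S ω ≤ t} := by
    ext ω; simp [hS, Finset.sum_apply]
  rw [hset, ← ENNReal.ofReal_toReal (measure_ne_top μ {ω | S ω ≤ t})]
  exact ENNReal.ofReal_le_ofReal hreal

end Aux

/-- `C₀(ξ) = 3(e−2)e² + 2(1+√(1/3)) ln(8/ξ)`. -/
noncomputable def Czero (ξ : ℝ) : ℝ :=
  3 * (Real.exp 1 - 2) * (Real.exp 1) ^ 2 + 2 * (1 + Real.sqrt (1 / 3)) * Real.log (8 / ξ)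

private lemma Czero_facts (ξ : ℝ) (hξ0 : 0 < ξ) (hξ1 : ξ < 1) :
    4 ≤ Czero ξ ∧ 2 * Real.log (8 / ξ) ≤ Czero ξ := by
  have he : (2.7182818283 : ℝ) < Real.exp 1 := Real.exp_one_gt_d9
  have hlog : 0 ≤ Real.log (8 / ξ) := Real.log_nonneg (by
    rw [le_div_iff₀ hξ0]; linarith)
  have hsq : 0 ≤ Real.sqrt (1/3) := Real.sqrt_nonneg _
  constructor
  · have : (4:ℝ) ≤ 3 * (Real.exp 1 - 2) * (Real.exp 1) ^ 2 := by nlinarith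
    unfold Czero; nlinarith
  · unfold Czero; nlinarith

/-- There is an absolute constant `C₃ > 0` such that for i.i.d. increments `hᵢ` with
`|hᵢ| ≤ 1` a.s. and `V₀ = E[hᵢ²]`, for any `ξ ∈ (0,1)`, with probability at least `1 − ξ`,
simultaneously for all `n ≥ 1`, `n V₀ ≤ C₃ (V̂ₙ + C₀(ξ))` where `V̂ₙ = Σ_{i<n} hᵢ²`. -/
theorem variance_process_lower_bound :
    ∃ C₃ : ℝ, 0 < C₃ ∧
      ∀ (Ω : Type) [MeasurableSpace Ω] (μ : Measure Ω), IsProbabilityMeasure μ →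
      ∀ (h : ℕ → Ω → ℝ),
        (∀ i, Measurable (h i)) →
        iIndepFun h μ →
        (∀ i, IdentDistrib (h i) (h 0) μ μ) →
        (∀ i, ∀ᵐ ω ∂μ, |h i ω| ≤ 1) →
        ∀ (V₀ : ℝ), V₀ = ∫ ω, (h 0 ω) ^ 2 ∂μ →
        ∀ (ξ : ℝ), 0 < ξ → ξ < 1 →
        ENNReal.ofReal (1 - ξ) ≤
          μ {ω | ∀ n : ℕ, 1 ≤ n →
            n * V₀ ≤ C₃ * ((∑ i ∈ Finset.range n, (h i ω) ^ 2) + Czero ξ)} := by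
  refine ⟨8, by norm_num, ?_⟩
  intro Ω _ μ hprob h hm hind hid hb V₀ hV ξ hξ0 hξ1
  obtain ⟨hC4, hClog⟩ := Czero_facts ξ hξ0 hξ1
  set C := Czero ξ with hCdef
  set X : ℕ → Ω → ℝ := fun i ω => (h i ω) ^ 2 with hXdef
  have hXm : ∀ i, Measurable (X i) := fun i => (hm i).pow_const 2
  have hXind : iIndepFun X μ :=
    hind.comp (fun _ => fun x : ℝ => x ^ 2) (fun _ => measurable_id.pow_const 2)
  have hXb : ∀ i, ∀ᵐ ω ∂μ, X i ω ∈ Set.Icc (0:ℝ) 1 := by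
    intro i
    filter_upwards [hb i] with ω hω
    constructor
    · exact sq_nonneg _
    · calc (h i ω)^2 = |h i ω|^2 := (sq_abs _).symm
        _ ≤ 1 := by nlinarith [abs_nonneg (h i ω)]
  have hV0nn : 0 ≤ V₀ := hV ▸ integral_nonneg fun ω => sq_nonneg _
  have hE : ∀ i, ∫ ω, X i ω ∂μ = V₀ := by
    intro i
    rw [hV]
    exact ((hid i).comp (measurable_id.pow_const 2)).integral_eq
  -- the good set
  set G : Set Ω := {ω | ∀ n : ℕ, 1 ≤ n →
      (n : ℝ) * V₀ ≤ 8 * ((∑ i ∈ Finset.range n, (h i ω) ^ 2) + C)} with hGdef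
  have hGmeas : MeasurableSet G := by
    have : G = ⋂ n : ℕ, {ω | 1 ≤ n →
        (n : ℝ) * V₀ ≤ 8 * ((∑ i ∈ Finset.range n, (h i ω) ^ 2) + C)} := by
      ext ω; simp [hGdef, Set.mem_iInter]
    rw [this]
    refine MeasurableSet.iInter fun n => ?_
    by_cases hn : 1 ≤ n
    · simp only [hn, forall_const]
      exact measurableSet_le measurable_const
        (((Finset.measurable_sum _ fun i _ => (hm i).pow_const 2).add_const C).const_mul 8)
    · simp [hn]
  -- bad sets
  set A : ℕ → Set Ω := fun k =>
    {ω | ∑ i ∈ Finset.range (2 ^ k), X i ω < 2 ^ k * V₀ / 4 - C} with hAdef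
  have hcover : Gᶜ ⊆ ⋃ k, A k := by
    intro ω hω
    simp only [hGdef, Set.mem_compl_iff, Set.mem_setOf_eq, not_forall] at hω
    obtain ⟨n, hn1, hn2⟩ := hω
    push_neg at hn2
    set k := Nat.log 2 n with hk
    have h1 : 2 ^ k ≤ n := Nat.pow_log_le_self 2 (by omega)
    have h2 : n < 2 ^ (k + 1) := Nat.lt_pow_succ_log_self (by norm_num) n
    have hsub : ∑ i ∈ Finset.range (2 ^ k), X i ω ≤ ∑ i ∈ Finset.range n, X i ω :=
      Finset.sum_le_sum_of_subset_of_nonneg (Finset.range_subset_range.2 h1)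
        (fun i _ _ => sq_nonneg _)
    have hcast : (n : ℝ) ≤ 2 ^ (k + 1) := by
      have := h2.le
      exact_mod_cast Nat.cast_le.2 this |>.trans (by push_cast; norm_num)
    refine Set.mem_iUnion.2 ⟨k, ?_⟩
    simp only [hAdef, Set.mem_setOf_eq]
    have hnV : (n : ℝ) * V₀ ≤ 2 ^ (k + 1) * V₀ := mul_le_mul_of_nonneg_right hcast hV0nn
    have : (2:ℝ) ^ (k+1) = 2 * 2 ^ k := by ring
    nlinarith [hsub, hn2, hnV]
  -- bound on the union of bad sets
  have hbad : μ (⋃ k, A k) ≤ ENNReal.ofReal ξ := by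
    by_cases hVz : V₀ = 0
    · have : (⋃ k, A k) = ∅ := by
        refine Set.iUnion_eq_empty.2 fun k => Set.eq_empty_iff_forall_notMem.2 fun ω hω => ?_
        simp only [hAdef, Set.mem_setOf_eq, hVz] at hω
        have h0 : (0:ℝ) ≤ ∑ i ∈ Finset.range (2 ^ k), X i ω :=
          Finset.sum_nonneg fun i _ => sq_nonneg _
        have : (0:ℝ) < C := by linarith
        nlinarith
      rw [this]; simp
    · have hVpos : 0 < V₀ := lt_of_le_of_ne hV0nn (Ne.symm hVz)
      have hex : ∃ k : ℕ, 4 * C < 2 ^ k * V₀ := by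
        obtain ⟨k, hk⟩ := pow_unbounded_of_one_lt (4 * C / V₀) (one_lt_two (α := ℝ))
        exact ⟨k, by rwa [div_lt_iff₀ hVpos] at hk⟩
      set k₀ := Nat.find hex with hk₀def
      have hk₀ : 4 * C < 2 ^ k₀ * V₀ := Nat.find_spec hex
      have hAempty : ∀ k < k₀, A k = ∅ := by
        intro k hk
        have hnot : ¬(4 * C < 2 ^ k * V₀) := Nat.find_min hex hk
        push_neg at hnot
        refine Set.eq_empty_iff_forall_notMem.2 fun ω hω => ?_
        simp only [hAdef, Set.mem_setOf_eq] at hω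
        have h0 : (0:ℝ) ≤ ∑ i ∈ Finset.range (2 ^ k), X i ω :=
          Finset.sum_nonneg fun i _ => sq_nonneg _
        nlinarith
      set r : ENNReal := ENNReal.ofReal (Real.exp (-C)) with hrdef
      have hAk : ∀ j : ℕ, μ (A (k₀ + j)) ≤ r ^ (j + 2) := by
        intro j
        have hsub : A (k₀ + j) ⊆
            {ω | ∑ i ∈ Finset.range (2 ^ (k₀ + j)), X i ω ≤ 2 ^ (k₀ + j) * V₀ / 4 - C} := by
          intro ω hω
          simp only [hAdef, Set.mem_setOf_eq] at hω ⊢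
          exact le_of_lt hω
        have hch := chernoff_sum μ X hXm hXind hXb V₀ hV0nn hE (2 ^ (k₀ + j))
          ((2:ℝ) ^ (k₀ + j) * V₀ / 4 - C)
        have hcast2 : ((2 ^ (k₀ + j) : ℕ) : ℝ) = (2:ℝ) ^ (k₀ + j) := by push_cast; ring
        rw [hcast2] at hch
        refine le_trans (measure_mono hsub) (le_trans hch ?_)
        have hjp : ((j:ℝ) + 1) ≤ 2 ^ j := by
          have := Nat.lt_two_pow_self (n := j)
          exact_mod_cast Nat.succ_le_of_lt this
        have hpow : (2:ℝ) ^ (k₀ + j) * V₀ = 2 ^ j * (2 ^ k₀ * V₀) := by ring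
        have hkey : ((j:ℝ) + 1) * (4 * C) ≤ 2 ^ (k₀ + j) * V₀ := by
          rw [hpow]
          have h4C : (0:ℝ) ≤ 4 * C := by linarith
          calc ((j:ℝ) + 1) * (4 * C) ≤ 2 ^ j * (4 * C) :=
                mul_le_mul_of_nonneg_right hjp h4C
            _ ≤ 2 ^ j * (2 ^ k₀ * V₀) :=
                mul_le_mul_of_nonneg_left hk₀.le (by positivity)
        have hexp : Real.exp ((2:ℝ) ^ (k₀ + j) * V₀ / 4 - C - 2 ^ (k₀ + j) * V₀ / 2)
            ≤ Real.exp (-C) ^ (j + 2) := by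
          rw [← Real.exp_nat_mul]
          apply Real.exp_le_exp.2
          push_cast
          nlinarith [hkey]
        calc ENNReal.ofReal (Real.exp ((2:ℝ) ^ (k₀ + j) * V₀ / 4 - C - 2 ^ (k₀ + j) * V₀ / 2))
            ≤ ENNReal.ofReal (Real.exp (-C) ^ (j + 2)) := ENNReal.ofReal_le_ofReal hexp
          _ = r ^ (j + 2) := by rw [hrdef, ← ENNReal.ofReal_pow (Real.exp_nonneg _)]
      -- real-number estimates about exp(-C)
      have hL : Real.exp (Real.log (8/ξ)) = 8/ξ := Real.exp_log (by positivity)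
      have hexpC2 : Real.exp (-C) ≤ (ξ/8)^2 := by
        have h1 : Real.exp (-C) ≤ Real.exp (-(2 * Real.log (8/ξ))) :=
          Real.exp_le_exp.2 (by linarith)
        have h2 : Real.exp (-(2 * Real.log (8/ξ))) = (ξ/8)^2 := by
          rw [show -(2 * Real.log (8/ξ)) = (-(Real.log (8/ξ))) + (-(Real.log (8/ξ))) by ring,
            Real.exp_add, Real.exp_neg, hL, inv_div]
          ring
        linarith
      have hexp_half : Real.exp (-C) ≤ (2:ℝ)⁻¹ := by
        have h1 : Real.exp (-C) ≤ Real.exp (-1) := Real.exp_le_exp.2 (by linarith)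
        have h2 : (2:ℝ) ≤ Real.exp 1 := by linarith [Real.add_one_le_exp (1:ℝ)]
        have h3 : Real.exp (-1) ≤ (2:ℝ)⁻¹ := by
          rw [Real.exp_neg]; exact inv_anti₀ (by norm_num) h2
        exact h1.trans h3
      have hr_half : r ≤ 2⁻¹ := by
        rw [hrdef, show ((2:ℝ≥0∞))⁻¹ = ENNReal.ofReal (2:ℝ)⁻¹ by
          rw [ENNReal.ofReal_inv_of_pos (by norm_num)]; norm_num]
        exact ENNReal.ofReal_le_ofReal hexp_half
      have hinv : (1 - r)⁻¹ ≤ 2 := by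
        have h1 : (2:ℝ≥0∞)⁻¹ ≤ 1 - r := by
          calc (2:ℝ≥0∞)⁻¹ = 1 - 2⁻¹ := ENNReal.one_sub_inv_two.symm
            _ ≤ 1 - r := tsub_le_tsub_left hr_half 1
        calc (1 - r)⁻¹ ≤ ((2:ℝ≥0∞)⁻¹)⁻¹ := ENNReal.inv_le_inv' h1
          _ = 2 := by simp
      have hr2 : r ^ 2 ≤ ENNReal.ofReal (ξ / 2) := by
        rw [hrdef, ← ENNReal.ofReal_pow (Real.exp_nonneg _)]
        apply ENNReal.ofReal_le_ofReal
        have h3 : ξ^3 ≤ 1 := pow_le_one₀ hξ0.le hξ1.le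
        have hx4 : ξ^4 ≤ ξ := by nlinarith
        nlinarith [Real.exp_nonneg (-C), hexpC2]
      calc μ (⋃ k, A k) ≤ ∑' k, μ (A k) := measure_iUnion_le A
        _ = ∑' j : ℕ, μ (A (k₀ + j)) := by
            refine (Function.Injective.tsum_eq (g := fun j => k₀ + j) ?_ ?_).symm
            · intro a b hab
              simpa using hab
            · intro k hk
              simp only [Function.mem_support, ne_eq] at hk
              by_contra hkr
              simp only [Set.mem_range, not_exists] at hkr
              have hklt : k < k₀ := by
                by_contra hge
                exact hkr (k - k₀) (by omega)
              exact hk (by rw [hAempty k hklt]; simp)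
        _ ≤ ∑' j : ℕ, r ^ (j + 2) := ENNReal.tsum_le_tsum hAk
        _ = (∑' j : ℕ, r ^ j) * r ^ 2 := by
            simp_rw [pow_add]
            exact ENNReal.tsum_mul_right
        _ = (1 - r)⁻¹ * r ^ 2 := by rw [ENNReal.tsum_geometric]
        _ ≤ 2 * ENNReal.ofReal (ξ / 2) := mul_le_mul' hinv hr2
        _ = ENNReal.ofReal ξ := by
            rw [show (2:ℝ≥0∞) = ENNReal.ofReal (2:ℝ) by norm_num,
              ← ENNReal.ofReal_mul (by norm_num)]
            rw [show (2:ℝ) * (ξ / 2) = ξ by ring]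
  -- conclude
  have hGc : μ Gᶜ ≤ ENNReal.ofReal ξ := le_trans (measure_mono hcover) hbad
  have hsum : μ G + μ Gᶜ = 1 := by
    rw [measure_add_measure_compl hGmeas, measure_univ]
  have hmain : ENNReal.ofReal (1 - ξ) + ENNReal.ofReal ξ ≤ μ G + ENNReal.ofReal ξ := by
    rw [← ENNReal.ofReal_add (by linarith) hξ0.le,
      show (1 - ξ) + ξ = 1 by ring, ENNReal.ofReal_one]
    calc (1:ℝ≥0∞) = μ G + μ Gᶜ := hsum.symm
      _ ≤ μ G + ENNReal.ofReal ξ := add_le_add_right hGc _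
  exact (ENNReal.add_le_add_iff_right ENNReal.ofReal_ne_top).1 hmain
end

section
/- There exists an absolute constant K > 0 such that for any α ∈ (0,1), with probability at least 1 − α, simultaneously for all n ≥ K·ln(4/α), the simple random walk satisfies |Sₙ| ≤ √(K·n·ln(ln n / α)). -/
open MeasureTheory ProbabilityTheory Real Finset
open scoped NNReal ENNReal

variable {Ω : Type} [MeasurableSpace Ω] {μ : Measure Ω}

lemma coin_mgf [IsProbabilityMeasure μ] {X : Ω → ℝ} (hX : Measurable X)
    (hae : ∀ᵐ ω ∂μ, X ω = 1 ∨ X ω = -1) (hhalf : μ {ω | X ω = 1} = ENNReal.ofReal (1/2)) (t : ℝ) :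
    mgf X μ t = Real.cosh t := by
  set s1 : Set Ω := {ω | X ω = 1} with hs1
  set s2 : Set Ω := {ω | X ω = -1} with hs2
  have hm1 : MeasurableSet s1 := hX (measurableSet_singleton 1)
  have hm2 : MeasurableSet s2 := hX (measurableSet_singleton (-1))
  have hdisj : Disjoint s1 s2 := by
    rw [Set.disjoint_left]; intro ω h1 h2; simp only [hs1, hs2, Set.mem_setOf_eq] at h1 h2
    rw [h1] at h2; norm_num at h2
  have hcompl : μ (s1 ∪ s2)ᶜ = 0 := by
    refine measure_mono_null ?_ (ae_iff.mp hae)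
    intro ω hω
    simp only [Set.mem_compl_iff, Set.mem_union, hs1, hs2, Set.mem_setOf_eq, not_or] at hω ⊢
    tauto
  have hunion : μ (s1 ∪ s2) = 1 := by
    have := prob_compl_eq_zero_iff (hm1.union hm2) |>.mp hcompl
    exact this
  have h2 : μ s2 = ENNReal.ofReal (1/2) := by
    have hadd : μ s1 + μ s2 = 1 := by rw [← measure_union hdisj hm2, hunion]
    rw [hhalf] at hadd
    have : ENNReal.ofReal (1/2) + ENNReal.ofReal (1/2) = 1 := by
      rw [← ENNReal.ofReal_add (by norm_num) (by norm_num)]; norm_num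
    rw [← this] at hadd
    exact (ENNReal.add_right_inj (by simp)).mp hadd
  have hfun : (fun ω => Real.exp (t * X ω)) =ᵐ[μ]
      (s1.indicator (fun _ => Real.exp t) + s2.indicator (fun _ => Real.exp (-t))) := by
    filter_upwards [hae] with ω hω
    rcases hω with h | h
    · have h1 : ω ∈ s1 := h
      have h2' : ω ∉ s2 := by simp [hs2, h]; norm_num
      simp [Set.indicator_of_mem h1, Set.indicator_of_notMem h2', h]
    · have h1 : ω ∉ s1 := by simp [hs1, h]; norm_num
      have h2' : ω ∈ s2 := h
      simp [Set.indicator_of_mem h2', Set.indicator_of_notMem h1, h]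
  have : mgf X μ t = ∫ ω, (s1.indicator (fun _ => Real.exp t) + s2.indicator (fun _ => Real.exp (-t))) ω ∂μ :=
    integral_congr_ae hfun
  rw [mgf] at this ⊢
  rw [this]
  simp only [Pi.add_apply]
  rw [integral_add ((integrable_const _).indicator hm1) ((integrable_const _).indicator hm2)]
  rw [integral_indicator_const _ hm1, integral_indicator_const _ hm2, measureReal_def, measureReal_def, hhalf, h2, Real.cosh_eq]
  rw [ENNReal.toReal_ofReal (by norm_num)]
  simp [smul_eq_mul]; ring

variable {Ω' : Type}
section MAX
variable {Ω : Type} [m0 : MeasurableSpace Ω] {μ : Measure Ω}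

lemma maximal_chernoff [IsProbabilityMeasure μ] (A : ℕ → Ω → ℝ)
    (hA : ∀ i, Measurable (A i))
    (hind : iIndepFun A μ)
    (hbd : ∀ i, ∀ᵐ ω ∂μ, |A i ω| ≤ 1)
    (hmgf : ∀ i t, mgf (A i) μ t ≤ Real.exp (t^2/2))
    (h1 : ∀ i t, 1 ≤ mgf (A i) μ t)
    {c : ℝ} (hc : 0 < c) (m : ℕ) (hm : 0 < m) :
    μ {ω | ∃ k ≤ m, c ≤ ∑ i ∈ Finset.range k, A i ω}
      ≤ ENNReal.ofReal (Real.exp (-c^2/(2*m))) := by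
  classical
  set t : ℝ := c / m with ht_def
  have hmpos : (0:ℝ) < m := by exact_mod_cast hm
  have ht : 0 < t := div_pos hc hmpos
  set S : ℕ → Ω → ℝ := fun k ω => ∑ i ∈ Finset.range k, A i ω with hS
  set f : ℕ → Ω → ℝ := fun k ω => Real.exp (t * S k ω) with hf
  -- filtration
  set ℱ : Filtration ℕ m0 :=
    { seq := fun n => ⨆ i ∈ Set.Iio n, MeasurableSpace.comap (A i) inferInstance,
      mono' := fun n n' hnn' => biSup_mono (fun i hi => lt_of_lt_of_le hi hnn'),
      le' := fun n => iSup₂_le fun i _ => (hA i).comap_le } with hℱ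
  have hAmeas : ∀ i n, i < n → Measurable[ℱ n] (A i) := by
    intro i n hin
    have h0 : Measurable[MeasurableSpace.comap (A i) inferInstance] (A i) :=
      Measurable.of_comap_le le_rfl
    refine h0.mono ?_ le_rfl
    exact le_iSup₂ (f := fun j (_ : j ∈ Set.Iio n) => MeasurableSpace.comap (A j) inferInstance) i hin
  have hSmeas : ∀ n, Measurable[ℱ n] (S n) := by
    intro n
    apply Finset.measurable_sum
    intro i hi
    exact hAmeas i n (Finset.mem_range.mp hi)
  have hfmeas : ∀ n, StronglyMeasurable[ℱ n] (f n) := by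
    intro n
    exact (Real.measurable_exp.comp ((hSmeas n).const_mul t)).stronglyMeasurable
  have hSbd : ∀ n, ∀ᵐ ω ∂μ, |S n ω| ≤ n := by
    intro n
    have := ae_all_iff.mpr hbd
    filter_upwards [this] with ω hω
    calc |S n ω| ≤ ∑ i ∈ Finset.range n, |A i ω| := Finset.abs_sum_le_sum_abs _ _
    _ ≤ ∑ i ∈ Finset.range n, 1 := Finset.sum_le_sum fun i _ => hω i
    _ = n := by simp
  have hfbd : ∀ n, ∀ᵐ ω ∂μ, ‖f n ω‖ ≤ Real.exp (t * n) := by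
    intro n
    filter_upwards [hSbd n] with ω hω
    rw [Real.norm_eq_abs, abs_of_pos (Real.exp_pos _), Real.exp_le_exp]
    have : S n ω ≤ n := le_trans (le_abs_self _) hω
    exact mul_le_mul_of_nonneg_left this ht.le
  have hfint : ∀ n, Integrable (f n) μ := by
    intro n
    exact Integrable.mono' (integrable_const (Real.exp (t * n)))
      ((hfmeas n).mono (ℱ.le n)).aestronglyMeasurable (hfbd n)
  -- submartingale
  have hsub : Submartingale f ℱ μ := by
    refine submartingale_nat (fun n => hfmeas n) hfint ?_
    intro n
    have hgbd : ∀ᵐ ω ∂μ, ‖Real.exp (t * A n ω)‖ ≤ Real.exp t := by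
      filter_upwards [hbd n] with ω hω
      rw [Real.norm_eq_abs, abs_of_pos (Real.exp_pos _), Real.exp_le_exp]
      nlinarith [le_trans (le_abs_self _) hω]
    have hgint : Integrable (fun ω => Real.exp (t * A n ω)) μ :=
      Integrable.mono' (integrable_const (Real.exp t))
        (((hA n).const_mul t).exp).aestronglyMeasurable hgbd
    have hsplit : f (n+1) = f n * (fun ω => Real.exp (t * A n ω)) := by
      funext ω
      simp only [hf, hS, Pi.mul_apply, Finset.sum_range_succ, mul_add, Real.exp_add]
    have hindep : Indep (MeasurableSpace.comap (A n) inferInstance) (ℱ n) μ := by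
      have := indep_iSup_of_disjoint (m := fun i => MeasurableSpace.comap (A i) inferInstance)
        (fun i => (hA i).comap_le) hind.iIndep (S := {n}) (T := Set.Iio n)
        (by simp [Set.disjoint_left])
      simp at this; exact this
    have hcond : μ[(fun ω => Real.exp (t * A n ω)) | ℱ n]
        =ᵐ[μ] fun _ => mgf (A n) μ t := by
      exact condExp_indep_eq ((hA n).comap_le) (ℱ.le n)
        ((Real.measurable_exp.comp ((Measurable.of_comap_le le_rfl).const_mul t)).stronglyMeasurable) hindep
    have hpull : μ[f (n+1) | ℱ n] =ᵐ[μ] f n * μ[(fun ω => Real.exp (t * A n ω)) | ℱ n] := by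
      rw [hsplit]
      exact condExp_stronglyMeasurable_mul_of_bound₀ (ℱ.le n)
        ((hfmeas n).aestronglyMeasurable) hgint (Real.exp (t * n)) (hfbd n)
    filter_upwards [hpull, hcond] with ω h1' h2'
    rw [h1', Pi.mul_apply, h2']
    have := h1 n t
    have hfnn : 0 ≤ f n ω := (Real.exp_pos _).le
    nlinarith
  -- Doob maximal inequality
  set ε : ℝ≥0 := (Real.exp (t*c)).toNNReal with hε
  have hεcoe : (ε : ℝ) = Real.exp (t*c) := Real.coe_toNNReal _ (Real.exp_pos _).le
  have hnonneg : (0 : ℕ → Ω → ℝ) ≤ f := fun k ω => (Real.exp_pos _).le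
  have hmax := maximal_ineq hsub hnonneg (ε := ε) m
  set Mset := {ω | (ε:ℝ) ≤ (Finset.range (m+1)).sup' nonempty_range_add_one fun k => f k ω} with hMset
  have hsubset : {ω | ∃ k ≤ m, c ≤ S k ω} ⊆ Mset := by
    rintro ω ⟨k, hk, hck⟩
    have h1' : (ε:ℝ) ≤ f k ω := by
      rw [hεcoe]
      exact Real.exp_le_exp.mpr (mul_le_mul_of_nonneg_left hck ht.le)
    exact le_trans h1' (Finset.le_sup' (fun k => f k ω) (Finset.mem_range.mpr (Nat.lt_succ_of_le hk)))
  have hintle : ∫ ω in Mset, f m ω ∂μ ≤ Real.exp (m * t^2/2) := by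
    have h2' : ∫ ω in Mset, f m ω ∂μ ≤ ∫ ω, f m ω ∂μ :=
      setIntegral_le_integral (hfint m) (Filter.Eventually.of_forall fun ω => (Real.exp_pos _).le)
    have h3' : ∫ ω, f m ω ∂μ = mgf (∑ i ∈ Finset.range m, A i) μ t := by
      rw [mgf]
      congr 1
      funext ω
      simp [hf, hS, Finset.sum_apply]
    have h4' : mgf (∑ i ∈ Finset.range m, A i) μ t ≤ Real.exp (m * t^2/2) := by
      rw [hind.mgf_sum hA (Finset.range m)]
      calc ∏ i ∈ Finset.range m, mgf (A i) μ t ≤ ∏ i ∈ Finset.range m, Real.exp (t^2/2) :=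
            Finset.prod_le_prod (fun i _ => mgf_nonneg) (fun i _ => hmgf i t)
      _ = Real.exp (m * t^2/2) := by
            rw [Finset.prod_const, Finset.card_range, ← Real.exp_nat_mul]
            ring_nf
      _ ≤ Real.exp (m * t^2/2) := le_refl _
    rw [h3'] at h2'
    exact le_trans h2' h4'
  have hmax2 : (ε : ℝ≥0∞) * μ Mset ≤ ENNReal.ofReal (Real.exp (m * t^2/2)) := by
    refine le_trans ?_ (le_trans hmax (ENNReal.ofReal_le_ofReal hintle))
    exact le_rfl
  have hεne : (ε : ℝ≥0∞) ≠ 0 := by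
    simp only [ne_eq, ENNReal.coe_eq_zero]
    rw [hε]
    simp [Real.toNNReal_eq_zero, not_le, Real.exp_pos]
  have hεtop : (ε : ℝ≥0∞) ≠ ⊤ := ENNReal.coe_ne_top
  have hdiv : μ Mset ≤ ENNReal.ofReal (Real.exp (m * t^2/2)) / (ε : ℝ≥0∞) := by
    rw [ENNReal.le_div_iff_mul_le (Or.inl hεne) (Or.inl hεtop), mul_comm]
    exact hmax2
  have hfinal : ENNReal.ofReal (Real.exp (m * t^2/2)) / (ε : ℝ≥0∞)
      = ENNReal.ofReal (Real.exp (-c^2/(2*m))) := by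
    have hcoe2 : (ε : ℝ≥0∞) = ENNReal.ofReal (Real.exp (t*c)) := by
      rw [hε, ENNReal.ofReal]
    rw [hcoe2, ← ENNReal.ofReal_div_of_pos (Real.exp_pos _), ← Real.exp_sub]
    congr 1
    rw [ht_def]
    field_simp
    ring
  exact le_trans (measure_mono hsubset) (le_trans hdiv (le_of_eq hfinal))

end MAX
lemma tele_bound {α x : ℝ} (hα0 : 0 < α) (hα1 : α < 1) (hx : 0 ≤ x) :
    2*(2*α/(x+4))^4 ≤ 2*α/(x+3) - 2*α/(x+4) := by
  have h34 : (0:ℝ) < x+3 := by linarith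
  have h44 : (0:ℝ) < x+4 := by linarith
  have heq : 2*α/(x+3) - 2*α/(x+4) = 2*α/((x+3)*(x+4)) := by field_simp; ring
  rw [heq, div_pow, mul_div_assoc', div_le_div_iff₀ (by positivity) (by positivity)]
  have h16 : 16*((x+3)*(x+4)) ≤ (x+4)^4 := by nlinarith [sq_nonneg x, sq_nonneg (x+4)]
  calc 2*(2*α)^4 * ((x+3)*(x+4)) = (2*α) * (α^3 * (16*((x+3)*(x+4)))) := by ring
  _ ≤ (2*α) * (1 * (x+4)^4) := by
        apply mul_le_mul_of_nonneg_left _ (by positivity)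
        have hα3 : α^3 ≤ 1 := by nlinarith [sq_nonneg α, mul_pos hα0 hα0]
        have h163 : 0 ≤ 16*((x+3)*(x+4)) := by positivity
        calc α^3 * (16*((x+3)*(x+4))) ≤ 1 * (16*((x+3)*(x+4))) :=
              mul_le_mul_of_nonneg_right hα3 h163
        _ ≤ 1 * (x+4)^4 := by linarith
  _ = 2*α*(x+4)^4 := by ring

section MAIN
variable {Ω : Type} [m0 : MeasurableSpace Ω] {μ : Measure Ω}

lemma two_sided_block [IsProbabilityMeasure μ] (A : ℕ → Ω → ℝ)
    (hA : ∀ i, Measurable (A i))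
    (hind : iIndepFun A μ)
    (hbd : ∀ i, ∀ᵐ ω ∂μ, |A i ω| ≤ 1)
    (hmgf : ∀ i t, mgf (A i) μ t ≤ Real.exp (t^2/2))
    (h1 : ∀ i t, 1 ≤ mgf (A i) μ t)
    {c : ℝ} (hc : 0 < c) (m : ℕ) (hm : 0 < m) :
    μ ({ω | ∃ k ≤ m, c ≤ ∑ i ∈ Finset.range k, A i ω} ∪
       {ω | ∃ k ≤ m, c ≤ ∑ i ∈ Finset.range k, (-A i) ω})
      ≤ ENNReal.ofReal (2 * Real.exp (-c^2/(2*m))) := by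
  have hB : ∀ i, Measurable (-A i) := fun i => (hA i).neg
  have hindB : iIndepFun (fun i => -A i) μ :=
    hind.comp (fun _ => (Neg.neg : ℝ → ℝ)) (fun _ => measurable_neg)
  have hbdB : ∀ i, ∀ᵐ ω ∂μ, |(-A i) ω| ≤ 1 := by
    intro i; filter_upwards [hbd i] with ω hω; simpa using hω
  have hmgfB : ∀ i t, mgf (-A i) μ t ≤ Real.exp (t^2/2) := by
    intro i t
    rw [mgf_neg]
    simpa [neg_sq] using hmgf i (-t)
  have h1B : ∀ i t, 1 ≤ mgf (-A i) μ t := by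
    intro i t; rw [mgf_neg]; exact h1 i (-t)
  calc μ _ ≤ μ {ω | ∃ k ≤ m, c ≤ ∑ i ∈ Finset.range k, A i ω} +
      μ {ω | ∃ k ≤ m, c ≤ ∑ i ∈ Finset.range k, (-A i) ω} := measure_union_le _ _
  _ ≤ ENNReal.ofReal (Real.exp (-c^2/(2*m))) + ENNReal.ofReal (Real.exp (-c^2/(2*m))) :=
      add_le_add (maximal_chernoff A hA hind hbd hmgf h1 hc m hm)
        (maximal_chernoff (fun i => -A i) hB hindB hbdB hmgfB h1B hc m hm)
  _ = ENNReal.ofReal (2 * Real.exp (-c^2/(2*m))) := by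
      rw [← ENNReal.ofReal_add (Real.exp_pos _).le (Real.exp_pos _).le]; ring_nf

/-- Finite-time LIL for the simple random walk: there is an absolute constant `K > 0`
such that for i.i.d. fair coin flips `Aᵢ ∈ {−1,+1}` and any `α ∈ (0,1)`, with probability
at least `1 − α`, simultaneously for all `n ≥ K ln(4/α)`,
`|Sₙ| ≤ √(K n ln(ln n / α))`. -/
theorem fair_coin_finite_time_LIL :
    ∃ K : ℝ, 0 < K ∧
      ∀ (Ω : Type) [MeasurableSpace Ω] (μ : Measure Ω), IsProbabilityMeasure μ →
      ∀ (A : ℕ → Ω → ℝ),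
        (∀ i, Measurable (A i)) →
        iIndepFun A μ →
        (∀ i, ∀ᵐ ω ∂μ, A i ω = 1 ∨ A i ω = -1) →
        (∀ i, μ {ω | A i ω = 1} = ENNReal.ofReal (1 / 2)) →
        ∀ (α : ℝ), 0 < α → α < 1 →
        ENNReal.ofReal (1 - α) ≤
          μ {ω | ∀ n : ℕ, K * Real.log (4 / α) ≤ n →
            |∑ i ∈ Finset.range n, A i ω| ≤ Real.sqrt (K * n * Real.log (Real.log n / α))} := by
  refine ⟨16, by norm_num, ?_⟩
  intro Ω mΩ μ hμ A hA hind hae hhalf α hα0 hα1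
  have hmgfA : ∀ i t, mgf (A i) μ t = Real.cosh t :=
    fun i t => coin_mgf (hA i) (hae i) (by simpa using hhalf i) t
  have hbd : ∀ i, ∀ᵐ ω ∂μ, |A i ω| ≤ 1 := by
    intro i; filter_upwards [hae i] with ω hω
    rcases hω with h | h <;> simp [h]
  have hmgfle : ∀ i t, mgf (A i) μ t ≤ Real.exp (t^2/2) := by
    intro i t; rw [hmgfA i t]; exact Real.cosh_le_exp_half_sq t
  have h1le : ∀ i t, 1 ≤ mgf (A i) μ t := by
    intro i t; rw [hmgfA i t]; exact Real.one_le_cosh t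
  set L : ℕ → ℝ := fun j => Real.log (Real.log ((2:ℝ)^j) / α) with hLdef
  set cc : ℕ → ℝ := fun j => Real.sqrt (16 * (2:ℝ)^j * L j) with hccdef
  have hlog2 : (0.6931471803 : ℝ) < Real.log 2 := Real.log_two_gt_d9
  have hxj : ∀ j : ℕ, 4 ≤ j → 1 < Real.log ((2:ℝ)^j) / α := by
    intro j hj
    rw [Real.log_pow, lt_div_iff₀ hα0]
    have : (4:ℝ) ≤ (j:ℝ) := by exact_mod_cast hj
    nlinarith
  have hLpos : ∀ j : ℕ, 4 ≤ j → 0 < L j := fun j hj => Real.log_pos (hxj j hj)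
  have hccpos : ∀ j : ℕ, 4 ≤ j → 0 < cc j := by
    intro j hj
    apply Real.sqrt_pos.mpr
    have := hLpos j hj
    positivity
  set Bad : ℕ → Set Ω := fun i =>
    {ω | ∃ k ≤ 2^(i+5), cc (i+4) ≤ ∑ i' ∈ Finset.range k, A i' ω} ∪
    {ω | ∃ k ≤ 2^(i+5), cc (i+4) ≤ ∑ i' ∈ Finset.range k, (-A i') ω} with hBaddef
  have hbadle : ∀ i : ℕ, μ (Bad i) ≤ ENNReal.ofReal (2*α/(↑i+3) - 2*α/(↑i+4)) := by
    intro i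
    set j := i + 4 with hj
    have hj4 : 4 ≤ j := by omega
    have hmpos : 0 < 2^(j+1) := Nat.pow_pos (by norm_num)
    have hblock := two_sided_block A hA hind hbd hmgfle h1le (hccpos j hj4) (2^(j+1)) hmpos
    have hmcast : ((2^(j+1) : ℕ) : ℝ) = (2:ℝ)^(j+1) := by push_cast; ring
    refine le_trans hblock (ENNReal.ofReal_le_ofReal ?_)
    have hLj := hLpos j hj4
    have hccsq : cc j ^ 2 = 16 * (2:ℝ)^j * L j := by
      rw [hccdef]
      exact Real.sq_sqrt (by positivity)
    have hexp : -cc j^2/(2*((2^(j+1):ℕ):ℝ)) = -(4 * L j) := by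
      rw [hccsq, hmcast, pow_succ]
      have h2j : (2:ℝ)^j ≠ 0 := by positivity
      field_simp
      ring
    rw [hexp]
    have hx : Real.exp (-(4 * L j)) = ((Real.log ((2:ℝ)^j) / α)⁻¹) ^ 4 := by
      rw [show -(4 * L j) = (4:ℕ) * (-L j) by push_cast; ring, Real.exp_nat_mul,
        Real.exp_neg, Real.exp_log (lt_trans one_pos (hxj j hj4))]
    rw [hx]
    have hjR : (4:ℝ) ≤ (j:ℝ) := by exact_mod_cast hj4
    have hjiR : (j:ℝ) = (i:ℝ) + 4 := by rw [hj]; push_cast; ring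
    have hinv : (Real.log ((2:ℝ)^j) / α)⁻¹ ≤ 2*α/((i:ℝ)+4) := by
      rw [Real.log_pow, inv_div, ← hjiR]
      rw [div_le_div_iff₀ (by nlinarith) (by nlinarith)]
      nlinarith [mul_pos (mul_pos hα0 (show (0:ℝ) < (j:ℝ) by linarith)) (show (0:ℝ) < 2*Real.log 2 - 1 by linarith)]
    have hpos : 0 ≤ (Real.log ((2:ℝ)^j) / α)⁻¹ :=
      (inv_pos.mpr (lt_trans zero_lt_one (hxj j hj4))).le
    calc 2 * ((Real.log ((2:ℝ)^j) / α)⁻¹) ^ 4 ≤ 2 * (2*α/((i:ℝ)+4))^4 := by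
          have := pow_le_pow_left₀ hpos hinv 4
          linarith
    _ ≤ 2*α/((i:ℝ)+3) - 2*α/((i:ℝ)+4) := tele_bound hα0 hα1 (Nat.cast_nonneg i)
  have hunion : μ (⋃ i, Bad i) ≤ ENNReal.ofReal α := by
    refine le_trans (measure_iUnion_le _) ?_
    rw [ENNReal.tsum_eq_iSup_sum]
    refine iSup_le fun s => ?_
    obtain ⟨n, hn⟩ := s.exists_nat_subset_range
    calc ∑ i ∈ s, μ (Bad i) ≤ ∑ i ∈ Finset.range n, μ (Bad i) :=
          Finset.sum_le_sum_of_subset hn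
    _ ≤ ∑ i ∈ Finset.range n, ENNReal.ofReal (2*α/(↑i+3) - 2*α/(↑i+4)) :=
          Finset.sum_le_sum fun i _ => hbadle i
    _ = ENNReal.ofReal (∑ i ∈ Finset.range n, (2*α/((i:ℝ)+3) - 2*α/((i:ℝ)+4))) := by
          rw [ENNReal.ofReal_sum_of_nonneg]
          intro i _
          have hi : (0:ℝ) ≤ (i:ℝ) := Nat.cast_nonneg i
          rw [sub_nonneg, div_le_div_iff₀ (by nlinarith) (by nlinarith)]
          nlinarith
    _ ≤ ENNReal.ofReal α := by
          apply ENNReal.ofReal_le_ofReal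
          have htel : ∑ i ∈ Finset.range n, (2*α/((i:ℝ)+3) - 2*α/((i:ℝ)+4))
              = 2*α/3 - 2*α/((n:ℝ)+3) := by
            calc ∑ i ∈ Finset.range n, (2*α/((i:ℝ)+3) - 2*α/((i:ℝ)+4))
                = ∑ i ∈ Finset.range n, ((fun i : ℕ => 2*α/((i:ℝ)+3)) i - (fun i : ℕ => 2*α/((i:ℝ)+3)) (i+1)) := by
                  apply Finset.sum_congr rfl
                  intro i _
                  push_cast
                  ring
            _ = (fun i : ℕ => 2*α/((i:ℝ)+3)) 0 - (fun i : ℕ => 2*α/((i:ℝ)+3)) n :=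
                  Finset.sum_range_sub' _ n
            _ = 2*α/3 - 2*α/((n:ℝ)+3) := by norm_num
          rw [htel]
          have hn3 : (0:ℝ) < (n:ℝ)+3 := by positivity
          have h0 : (0:ℝ) ≤ 2*α/((n:ℝ)+3) := by positivity
          nlinarith
  have hone : (1:ℝ≥0∞) ≤ μ {ω | ∀ n : ℕ, 16 * Real.log (4 / α) ≤ n →
        |∑ i ∈ Finset.range n, A i ω| ≤ Real.sqrt (16 * n * Real.log (Real.log n / α))}
      + ENNReal.ofReal α := by
    have hcover : (Set.univ : Set Ω) ⊆
        {ω | ∀ n : ℕ, 16 * Real.log (4 / α) ≤ n →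
          |∑ i ∈ Finset.range n, A i ω| ≤ Real.sqrt (16 * n * Real.log (Real.log n / α))}
        ∪ (⋃ i, Bad i) := by
      intro ω _
      by_cases hg : ω ∈ ⋃ i, Bad i
      · exact Or.inr hg
      · left
        simp only [Set.mem_iUnion, not_exists] at hg
        intro n hn
        have hexp1 : Real.exp 1 < 4 := by
          have := Real.exp_one_lt_d9
          linarith
        have hlog4 : 1 < Real.log (4/α) := by
          have h4 : Real.exp 1 < 4/α := by
            have h1α : (4:ℝ) ≤ 4/α := by
              rw [le_div_iff₀ hα0]; nlinarith
            linarith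
          calc 1 = Real.log (Real.exp 1) := (Real.log_exp 1).symm
          _ < Real.log (4/α) := Real.log_lt_log (Real.exp_pos 1) h4
        have hn16 : (16:ℝ) ≤ (n:ℝ) := by nlinarith
        have hn16' : (16:ℕ) ≤ n := by exact_mod_cast hn16
        have hnne : n ≠ 0 := by omega
        set j := Nat.log 2 n with hjdef
        have hj4 : 4 ≤ j := by
          rw [hjdef]
          exact (Nat.le_log_iff_pow_le (by norm_num) hnne).mpr (by simpa using hn16')
        have h2jn : 2^j ≤ n := Nat.pow_log_le_self 2 hnne
        have hn2j : n < 2^(j+1) := Nat.lt_pow_succ_log_self (by norm_num) n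
        have hbad := hg (j - 4)
        rw [hBaddef] at hbad
        simp only [Set.mem_union, Set.mem_setOf_eq, not_or, not_exists] at hbad
        have hjj : j - 4 + 4 = j := by omega
        have hjj5 : j - 4 + 5 = j + 1 := by omega
        obtain ⟨hbad1, hbad2⟩ := hbad
        have hb1 := hbad1 n
        have hb2 := hbad2 n
        rw [hjj, hjj5] at hb1 hb2
        have hnle : n ≤ 2^(j+1) := hn2j.le
        have habs : |∑ i' ∈ Finset.range n, A i' ω| < cc j := by
          rw [abs_lt]
          constructor
          · have h2 : ¬ cc j ≤ ∑ i' ∈ Finset.range n, (-A i') ω := fun hcon => hb2 ⟨hnle, hcon⟩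
            push_neg at h2
            have hsn : ∑ i' ∈ Finset.range n, (-A i') ω = -∑ i' ∈ Finset.range n, A i' ω := by
              simp [Pi.neg_apply]
            rw [hsn] at h2
            linarith
          · have h1' : ¬ cc j ≤ ∑ i' ∈ Finset.range n, A i' ω := fun hcon => hb1 ⟨hnle, hcon⟩
            push_neg at h1'
            exact h1'
        have h2jpos : (0:ℝ) < Real.log ((2:ℝ)^j) := by
          have hx1 := hxj j hj4
          rw [one_lt_div hα0] at hx1
          linarith
        have h2jnR : ((2:ℝ))^j ≤ (n:ℝ) := by exact_mod_cast h2jn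
        have hnposR : (0:ℝ) < (n:ℝ) := by positivity
        have hlogmono : Real.log ((2:ℝ)^j) ≤ Real.log (n:ℝ) :=
          Real.log_le_log (by positivity) h2jnR
        have hdivpos : (0:ℝ) < Real.log ((2:ℝ)^j) / α := div_pos h2jpos hα0
        have hdivle : Real.log ((2:ℝ)^j)/α ≤ Real.log (n:ℝ) / α := by gcongr
        have hLle : L j ≤ Real.log (Real.log (n:ℝ) / α) := Real.log_le_log hdivpos hdivle
        have hkey : 16*(2:ℝ)^j * L j ≤ 16*(n:ℝ)*Real.log (Real.log (n:ℝ) / α) := by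
          apply mul_le_mul (by nlinarith) hLle (hLpos j hj4).le (by positivity)
        calc |∑ i' ∈ Finset.range n, A i' ω| ≤ cc j := habs.le
        _ ≤ Real.sqrt (16 * (n:ℝ) * Real.log (Real.log (n:ℝ) / α)) := by
            rw [hccdef]
            exact Real.sqrt_le_sqrt hkey
    have hmeas := measure_mono (μ := μ) hcover
    rw [measure_univ] at hmeas
    exact le_trans hmeas (le_trans (measure_union_le _ _) (add_le_add le_rfl hunion))
  have hfin : ENNReal.ofReal (1 - α) + ENNReal.ofReal α ≤
      μ {ω | ∀ n : ℕ, 16 * Real.log (4 / α) ≤ n →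
        |∑ i ∈ Finset.range n, A i ω| ≤ Real.sqrt (16 * n * Real.log (Real.log n / α))}
      + ENNReal.ofReal α := by
    rw [← ENNReal.ofReal_add (by linarith) hα0.le]
    simpa using hone
  exact (ENNReal.add_le_add_iff_right ENNReal.ofReal_ne_top).mp hfin

end MAIN
end

section
/- Suppose b₁, b₂, c are positive real numbers, x is a positive real number with x ≥ 8·max(b₁·[ln ln]₊(x), b₂), and x − √(b₁·x·[ln ln]₊(x) + b₂·x) − c ≤ 0. Then √x ≤ √(b₁·[ln ln]₊(2c) + b₂) + √c. -/
/-- `[ln ln]₊(x) = ln ln (max (x, e^e))`. -/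
noncomputable def lnlnPlus (x : ℝ) : ℝ :=
  Real.log (Real.log (max x (Real.exp (Real.exp 1))))

lemma lnlnPlus_one_le (x : ℝ) : 1 ≤ lnlnPlus x := by
  unfold lnlnPlus
  have h1 : Real.exp 1 ≤ Real.log (max x (Real.exp (Real.exp 1))) := by
    calc Real.exp 1 = Real.log (Real.exp (Real.exp 1)) := (Real.log_exp _).symm
    _ ≤ _ := Real.log_le_log (Real.exp_pos _) (le_max_right _ _)
  calc (1:ℝ) = Real.log (Real.exp 1) := (Real.log_exp 1).symm
  _ ≤ _ := Real.log_le_log (Real.exp_pos 1) h1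

lemma lnlnPlus_mono {a b : ℝ} (h : a ≤ b) : lnlnPlus a ≤ lnlnPlus b := by
  unfold lnlnPlus
  apply Real.log_le_log
  · calc (0:ℝ) < Real.exp 1 := Real.exp_pos 1
    _ = Real.log (Real.exp (Real.exp 1)) := (Real.log_exp _).symm
    _ ≤ _ := Real.log_le_log (Real.exp_pos _) (le_max_right _ _)
  · exact Real.log_le_log (lt_max_of_lt_right (Real.exp_pos _)) (max_le_max_right _ h)

/-- Inversion lemma for inequalities involving the iterated logarithm. -/
theorem iterlog_inversion (b₁ b₂ c x : ℝ) (hb₁ : 0 < b₁) (hb₂ : 0 < b₂) (hc : 0 < c)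
    (hx : 0 < x)
    (h8 : 8 * max (b₁ * lnlnPlus x) b₂ ≤ x)
    (hq : x - Real.sqrt (b₁ * x * lnlnPlus x + b₂ * x) - c ≤ 0) :
    Real.sqrt x ≤ Real.sqrt (b₁ * lnlnPlus (2 * c) + b₂) + Real.sqrt c := by
  have hL1 : 1 ≤ lnlnPlus x := lnlnPlus_one_le x
  have hmax1 : b₁ * lnlnPlus x ≤ x / 8 := by
    have := le_max_left (b₁ * lnlnPlus x) b₂; linarith
  have hmax2 : b₂ ≤ x / 8 := by
    have := le_max_right (b₁ * lnlnPlus x) b₂; linarith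
  -- first: sqrt(b₁ x L + b₂ x) ≤ x/2
  have hsum : b₁ * x * lnlnPlus x + b₂ * x ≤ (x/2)^2 := by nlinarith
  have hsq : Real.sqrt (b₁ * x * lnlnPlus x + b₂ * x) ≤ x / 2 := by
    calc Real.sqrt (b₁ * x * lnlnPlus x + b₂ * x) ≤ Real.sqrt ((x/2)^2) :=
      Real.sqrt_le_sqrt hsum
    _ = x/2 := Real.sqrt_sq (by positivity)
  have hx2c : x ≤ 2 * c := by linarith
  have hLle : lnlnPlus x ≤ lnlnPlus (2 * c) := lnlnPlus_mono hx2c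
  set A := Real.sqrt (b₁ * lnlnPlus (2 * c) + b₂) with hA
  have hL1' : 1 ≤ lnlnPlus (2 * c) := lnlnPlus_one_le _
  have hsum2 : b₁ * x * lnlnPlus x + b₂ * x ≤ x * (b₁ * lnlnPlus (2 * c) + b₂) := by
    nlinarith [mul_le_mul_of_nonneg_left hLle (mul_nonneg hb₁.le hx.le)]
  have hsqrt2 : Real.sqrt (b₁ * x * lnlnPlus x + b₂ * x) ≤ Real.sqrt x * A := by
    calc Real.sqrt (b₁ * x * lnlnPlus x + b₂ * x)
        ≤ Real.sqrt (x * (b₁ * lnlnPlus (2 * c) + b₂)) := Real.sqrt_le_sqrt hsum2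
    _ = Real.sqrt x * A := Real.sqrt_mul hx.le _
  have hkey : x ≤ Real.sqrt x * A + c := by linarith
  have hs2 : Real.sqrt x ^ 2 = x := Real.sq_sqrt hx.le
  have hc2 : Real.sqrt c ^ 2 = c := Real.sq_sqrt hc.le
  have hsnn : 0 ≤ Real.sqrt x := Real.sqrt_nonneg _
  have hAnn : 0 ≤ A := Real.sqrt_nonneg _
  have hcnn : 0 ≤ Real.sqrt c := Real.sqrt_nonneg _
  by_contra hcon
  push_neg at hcon
  nlinarith [mul_pos (sub_pos.2 hcon) (lt_of_le_of_lt (by linarith) hcon)]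
end
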